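/- arXiv:1701.03614 — 3 statements merged into one kernel-verified Lean document; each statement's English description precedes it below -/
import Mathlib

section
/- Let f : ℝⁿ → ℝⁿ be continuously differentiable on an open set containing ℝⁿ₊ such that for every x ∈ ℝⁿ₊ the transpose of the Jacobian of f at x is a compartmental matrix, i.e., ∂f_i/∂x_j(x) ≥ 0 for all i ≠ j and Σ_{i=1}^n ∂f_i/∂x_j(x) ≤ 0 for all j. Let u ∈ ℝⁿ₊ be constant and let x* ∈ ℝⁿ₊ be an equilibrium (u + f(x*) = 0) that is locally asymptotically stable relative to ℝⁿ₊: there exists δ > 0 such that every solution of ẋ = u + f(x) remaining in ℝⁿ₊ with ‖x(0) − x*‖ < δ converges to x* as t → ∞. Then x* is globally asymptotically stable relative to ℝⁿ₊: every solution of ẋ = u + f(x) remaining in ℝⁿ₊ converges to x* as t → ∞. -/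
open Matrix Filter

open Set Topology


lemma sup'_le_of_active_deriv_nonpos {ι : Type*} {s : Finset ι} (hs : s.Nonempty)
    (gs : ι → ℝ → ℝ) (Gs : ι → ℝ → ℝ) (t₁ t₂ : ℝ) (ht : t₁ ≤ t₂)
    (hcont : ∀ i ∈ s, ContinuousOn (gs i) (Icc t₁ t₂))
    (hderiv : ∀ i ∈ s, ∀ t ∈ Ico t₁ t₂, HasDerivAt (gs i) (Gs i t) t)
    (hactive : ∀ t ∈ Ico t₁ t₂, ∀ i ∈ s,
      (gs i t = s.sup' hs (fun j => gs j t)) → Gs i t ≤ 0) :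
    s.sup' hs (fun j => gs j t₂) ≤ s.sup' hs (fun j => gs j t₁) := by
  by_contra hcon
  push_neg at hcon
  set g : ℝ → ℝ := fun t => s.sup' hs (fun j => gs j t) with hgdef
  have hgcont : ContinuousOn g (Icc t₁ t₂) :=
    ContinuousOn.finset_sup'_apply hs hcont
  have ht12 : t₁ < t₂ := by
    rcases eq_or_lt_of_le ht with h | h
    · exfalso; rw [h] at hcon; exact lt_irrefl _ hcon
    · exact h
  set c : ℝ := (g t₂ - g t₁) / (2 * (t₂ - t₁)) with hcdef
  have hcpos : 0 < c := div_pos (by linarith [hcon]) (by linarith)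
  set A : Set ℝ := {t | t ∈ Icc t₁ t₂ ∧ g t - g t₁ - c * (t - t₁) ≤ 0} with hAdef
  have hAclosed : IsClosed A := by
    have : A = Icc t₁ t₂ ∩ (fun t => g t - g t₁ - c * (t - t₁)) ⁻¹' (Iic 0) := by
      ext t; simp [hAdef, Set.mem_inter_iff]
    rw [this]
    apply ContinuousOn.preimage_isClosed_of_isClosed _ isClosed_Icc isClosed_Iic
    exact (hgcont.sub continuousOn_const).sub (by fun_prop)
  have hAne : A.Nonempty := ⟨t₁, ⟨le_refl _, ht⟩, by simp⟩
  have hAbdd : BddAbove A := ⟨t₂, fun t htA => htA.1.2⟩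
  set τ := sSup A with hτdef
  have hτA : τ ∈ A := hAclosed.csSup_mem hAne hAbdd
  have hτmem : τ ∈ Icc t₁ t₂ := hτA.1
  have hτval : g τ - g t₁ - c * (τ - t₁) ≤ 0 := hτA.2
  have ht₂A : t₂ ∉ A := by
    intro hA
    have h2 := hA.2
    have hΔ : (t₂ - t₁) ≠ 0 := ne_of_gt (by linarith)
    have hcineq : c * (t₂ - t₁) = (g t₂ - g t₁) / 2 := by
      rw [hcdef]; field_simp
    rw [hcineq] at h2
    linarith
  have hτlt : τ < t₂ := lt_of_le_of_ne hτmem.2 (fun h => ht₂A (h ▸ hτA))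
  have hτIco : τ ∈ Ico t₁ t₂ := ⟨hτmem.1, hτlt⟩
  have hnotA : ∀ t, t ∈ Ioc τ t₂ → g t - g τ > c * (t - τ) := by
    intro t htmem
    have htnA : t ∉ A := fun hA => absurd (le_csSup hAbdd hA) (not_le.mpr htmem.1)
    have h1 : ¬(g t - g t₁ - c * (t - t₁) ≤ 0) := by
      intro h; exact htnA ⟨⟨le_trans hτmem.1 (le_of_lt htmem.1), htmem.2⟩, h⟩
    push_neg at h1
    nlinarith [hτval]
  have hIoc_mem : Ioc τ t₂ ∈ 𝓝[>] τ := Ioc_mem_nhdsGT_of_mem ⟨le_refl _, hτlt⟩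
  have hev : ∀ᶠ t in 𝓝[>] τ, ∃ i ∈ s,
      t ∈ Ioc τ t₂ ∧ gs i t = g t ∧ gs i t - g τ > c * (t - τ) := by
    filter_upwards [hIoc_mem] with t htmem
    obtain ⟨i, hi, hieq⟩ := Finset.exists_mem_eq_sup' hs (fun j => gs j t)
    exact ⟨i, hi, htmem, hieq.symm, by rw [← hieq]; exact hnotA t htmem⟩
  have hfreq : ∃ i ∈ s, ∃ᶠ t in 𝓝[>] τ,
      t ∈ Ioc τ t₂ ∧ gs i t = g t ∧ gs i t - g τ > c * (t - τ) := by
    by_contra hno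
    push_neg at hno
    have hall : ∀ᶠ t in 𝓝[>] τ, ∀ i ∈ s,
        ¬(t ∈ Ioc τ t₂ ∧ gs i t = g t ∧ gs i t - g τ > c * (t - τ)) :=
      (Filter.eventually_all_finset s).mpr (fun i hi => (hno i hi).mono (fun t ht ⟨h1, h2, h3⟩ => absurd (ht h1 h2) (not_le.mpr h3)))
    have hfalse : ∀ᶠ t in 𝓝[>] τ, False := by
      filter_upwards [hev, hall] with t h1 h2
      obtain ⟨i, hi, hmem, heq, hgt⟩ := h1
      exact h2 i hi ⟨hmem, heq, hgt⟩
    rw [Filter.eventually_false_iff_eq_bot] at hfalse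
    exact (nhdsGT_neBot τ).ne hfalse
  obtain ⟨i, hi, hifreq⟩ := hfreq
  -- continuity within the right neighborhood
  have hIccmem : Icc t₁ t₂ ∈ 𝓝[>] τ :=
    Filter.mem_of_superset hIoc_mem (fun t htmem =>
      ⟨le_trans hτmem.1 (le_of_lt htmem.1), htmem.2⟩)
  have hconti : Tendsto (gs i) (𝓝[>] τ) (𝓝 (gs i τ)) :=
    ((hcont i hi τ hτmem).mono_of_mem_nhdsWithin hIccmem)
  have hgconti : Tendsto g (𝓝[>] τ) (𝓝 (g τ)) :=
    ((hgcont τ hτmem).mono_of_mem_nhdsWithin hIccmem)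
  -- activity at τ
  have hact : gs i τ = g τ := by
    have htends : Tendsto (fun t => gs i t - g t) (𝓝[>] τ) (𝓝 (gs i τ - g τ)) :=
      hconti.sub hgconti
    have hfr : ∃ᶠ t in 𝓝[>] τ, (fun t => gs i t - g t) t ∈ ({0} : Set ℝ) := by
      apply hifreq.mono
      rintro t ⟨-, heq, -⟩
      simp [heq]
    have : gs i τ - g τ ∈ closure ({0} : Set ℝ) :=
      mem_closure_iff_frequently.mpr (htends.frequently hfr)
    rw [closure_singleton] at this
    simpa [sub_eq_zero] using this
  -- derivative at τ is ≥ c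
  have hd := hderiv i hi τ hτIco
  rw [hasDerivAt_iff_tendsto_slope] at hd
  have hslope : ∃ᶠ t in 𝓝[≠] τ, slope (gs i) τ t ∈ Ici c := by
    apply Filter.Frequently.filter_mono _ (nhdsWithin_mono τ (fun t htmem => by
      simp only [Set.mem_compl_iff, Set.mem_singleton_iff]
      exact ne_of_gt htmem))
    apply hifreq.mono
    rintro t ⟨hmem, -, hgt⟩
    have htpos : 0 < t - τ := sub_pos.mpr hmem.1
    rw [Set.mem_Ici, slope_def_field, le_div_iff₀ htpos]
    rw [hact]
    linarith
  have : Gs i τ ∈ closure (Ici c) :=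
    mem_closure_iff_frequently.mpr (hd.frequently hslope)
  rw [closure_Ici] at this
  have := hactive τ hτIco i hi hact
  rw [Set.mem_Ici] at *
  linarith


section
variable {n : ℕ}

/-- positive-part projection onto the nonnegative orthant -/
noncomputable def projPos (y : Fin n → ℝ) : Fin n → ℝ := fun i => max (y i) 0

/-- the extended vector field -/
noncomputable def extF (f : (Fin n → ℝ) → (Fin n → ℝ)) (y : Fin n → ℝ) : Fin n → ℝ :=
  f (projPos y) + (projPos y - y)

lemma projPos_nonneg (y : Fin n → ℝ) : ∀ i, 0 ≤ projPos y i := fun i => le_max_right _ _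

lemma projPos_of_nonneg {y : Fin n → ℝ} (hy : ∀ i, 0 ≤ y i) : projPos y = y := by
  funext i; exact max_eq_left (hy i)

lemma extF_of_nonneg {f : (Fin n → ℝ) → (Fin n → ℝ)} {y : Fin n → ℝ} (hy : ∀ i, 0 ≤ y i) :
    extF f y = f y := by
  simp [extF, projPos_of_nonneg hy]

/-- Key dissipativity inequality for `f` on the orthant. -/
lemma sum_f_sub_nonpos
    (U : Set (Fin n → ℝ)) (hUopen : IsOpen U)
    (hUsub : {x : Fin n → ℝ | ∀ i, 0 ≤ x i} ⊆ U)
    (f : (Fin n → ℝ) → (Fin n → ℝ))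
    (hf : ContDiffOn ℝ 1 f U)
    (hMetzler : ∀ x : Fin n → ℝ, (∀ i, 0 ≤ x i) →
      ∀ i j, i ≠ j → 0 ≤ fderiv ℝ f x (Pi.single j 1) i)
    (hcol : ∀ x : Fin n → ℝ, (∀ i, 0 ≤ x i) →
      ∀ j, ∑ i, fderiv ℝ f x (Pi.single j 1) i ≤ 0)
    (A B : Fin n → ℝ) (hA : ∀ i, 0 ≤ A i) (hB : ∀ i, 0 ≤ B i)
    (S : Finset (Fin n)) (hin : ∀ i ∈ S, B i ≤ A i) (hout : ∀ i, i ∉ S → A i ≤ B i) :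
    ∑ i ∈ S, (f A i - f B i) ≤ 0 := by
  -- the segment
  set L : ℝ → (Fin n → ℝ) := fun τ => B + τ • (A - B) with hLdef
  have hLorth : ∀ τ ∈ Icc (0:ℝ) 1, ∀ i, 0 ≤ L τ i := by
    intro τ hτ i
    have heq : L τ i = (1 - τ) * B i + τ * A i := by simp [hLdef]; ring
    rw [heq]
    have h1 : (0:ℝ) ≤ 1 - τ := by linarith [hτ.2]
    exact add_nonneg (mul_nonneg h1 (hB i)) (mul_nonneg hτ.1 (hA i))
  have hLU : ∀ τ ∈ Icc (0:ℝ) 1, L τ ∈ U := fun τ hτ => hUsub (hLorth τ hτ)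
  have hLderiv : ∀ τ : ℝ, HasDerivAt L (A - B) τ := by
    intro τ
    have h1 : HasDerivAt (fun τ : ℝ => τ • (A - B)) ((1:ℝ) • (A - B)) τ :=
      (hasDerivAt_id τ).smul_const (A - B)
    simpa [hLdef] using h1.const_add B
  have hdiffOn : DifferentiableOn ℝ f U := hf.differentiableOn one_ne_zero
  -- g and its derivative
  set g : ℝ → ℝ := fun τ => ∑ i ∈ S, f (L τ) i with hgdef
  have hgderiv : ∀ τ ∈ Icc (0:ℝ) 1,
      HasDerivAt g (∑ i ∈ S, (fderiv ℝ f (L τ) (A - B)) i) τ := by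
    intro τ hτ
    have hdAt : DifferentiableAt ℝ f (L τ) :=
      (hdiffOn (L τ) (hLU τ hτ)).differentiableAt (hUopen.mem_nhds (hLU τ hτ))
    have hcomp : HasDerivAt (fun τ => f (L τ)) (fderiv ℝ f (L τ) (A - B)) τ :=
      hdAt.hasFDerivAt.comp_hasDerivAt τ (hLderiv τ)
    have hcoord := hasDerivAt_pi.mp hcomp
    exact HasDerivAt.fun_sum (fun i _ => hcoord i)
  -- the derivative is nonpositive
  have hkey : ∀ τ ∈ Icc (0:ℝ) 1, ∑ i ∈ S, (fderiv ℝ f (L τ) (A - B)) i ≤ 0 := by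
    intro τ hτ
    set z := L τ with hz
    have hzorth : ∀ i, 0 ≤ z i := hLorth τ hτ
    have hAB : (A - B : Fin n → ℝ) = ∑ j, (A j - B j) • (Pi.single j (1:ℝ) : Fin n → ℝ) := by
      conv_lhs => rw [pi_eq_sum_univ (A - B : Fin n → ℝ)]
      refine Finset.sum_congr rfl (fun j _ => ?_)
      have h1 : (A - B) j = A j - B j := rfl
      rw [h1]
      congr 1
      funext i
      by_cases h : j = i
      · simp [Pi.single_apply, h]
      · simp [Pi.single_apply, h, Ne.symm h]
    have hexp : ∀ i, (fderiv ℝ f z (A - B)) i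
        = ∑ j, (A j - B j) * (fderiv ℝ f z (Pi.single j 1) i) := by
      intro i
      rw [hAB, map_sum]
      rw [Finset.sum_apply]
      congr 1; funext j
      rw [_root_.map_smul]
      simp
    calc ∑ i ∈ S, (fderiv ℝ f z (A - B)) i
        = ∑ i ∈ S, ∑ j, (A j - B j) * (fderiv ℝ f z (Pi.single j 1) i) := by
          exact Finset.sum_congr rfl (fun i _ => hexp i)
      _ = ∑ j, ∑ i ∈ S, (A j - B j) * (fderiv ℝ f z (Pi.single j 1) i) :=
          Finset.sum_comm
      _ = ∑ j, (A j - B j) * (∑ i ∈ S, fderiv ℝ f z (Pi.single j 1) i) := by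
          exact Finset.sum_congr rfl (fun j _ => (Finset.mul_sum _ _ _).symm)
      _ ≤ 0 := by
          apply Finset.sum_nonpos
          intro j _
          by_cases hjS : j ∈ S
          · -- A j ≥ B j, column sum over S is ≤ 0
            apply mul_nonpos_of_nonneg_of_nonpos
            · have := hin j hjS; linarith
            · have hsplit : ∑ i ∈ S, fderiv ℝ f z (Pi.single j 1) i
                  = ∑ i, fderiv ℝ f z (Pi.single j 1) i
                    - ∑ i ∈ Finset.univ \ S, fderiv ℝ f z (Pi.single j 1) i := by
                rw [Finset.sum_sdiff_eq_sub (Finset.subset_univ S)]; ring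
              rw [hsplit]
              have h1 := hcol z hzorth j
              have h2 : 0 ≤ ∑ i ∈ Finset.univ \ S, fderiv ℝ f z (Pi.single j 1) i := by
                apply Finset.sum_nonneg
                intro i hi
                rw [Finset.mem_sdiff] at hi
                exact hMetzler z hzorth i j (fun h => hi.2 (h ▸ hjS))
              linarith
          · -- A j ≤ B j, partial column sum over S is ≥ 0
            apply mul_nonpos_of_nonpos_of_nonneg
            · have := hout j hjS; linarith
            · apply Finset.sum_nonneg
              intro i hi
              exact hMetzler z hzorth i j (fun h => hjS (h ▸ hi))
  -- conclude: g 1 ≤ g 0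
  have hmono : g 1 ≤ g 0 := by
    have := sup'_le_of_active_deriv_nonpos (ι := Unit) (s := {()}) (by simp)
      (fun _ => g) (fun _ τ => ∑ i ∈ S, (fderiv ℝ f (L τ) (A - B)) i)
      0 1 zero_le_one
      (fun _ _ => fun τ hτ => ((hgderiv τ hτ).continuousAt).continuousWithinAt)
      (fun _ _ => fun τ hτ => hgderiv τ (Ico_subset_Icc_self hτ))
      (fun τ hτ _ _ _ => hkey τ (Ico_subset_Icc_self hτ))
    simpa using this
  have hL1 : L 1 = A := by funext i; simp [hLdef]
  have hL0 : L 0 = B := by funext i; simp [hLdef]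
  have : g 1 - g 0 = ∑ i ∈ S, (f A i - f B i) := by
    rw [hgdef]; simp only [hL1, hL0]
    rw [← Finset.sum_sub_distrib]
  linarith [hmono, this.symm ▸ sub_nonpos.mpr hmono]

end

section
variable {n : ℕ}

lemma sum_extF_sub_nonpos
    (U : Set (Fin n → ℝ)) (hUopen : IsOpen U)
    (hUsub : {x : Fin n → ℝ | ∀ i, 0 ≤ x i} ⊆ U)
    (f : (Fin n → ℝ) → (Fin n → ℝ))
    (hf : ContDiffOn ℝ 1 f U)
    (hMetzler : ∀ x : Fin n → ℝ, (∀ i, 0 ≤ x i) →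
      ∀ i j, i ≠ j → 0 ≤ fderiv ℝ f x (Pi.single j 1) i)
    (hcol : ∀ x : Fin n → ℝ, (∀ i, 0 ≤ x i) →
      ∀ j, ∑ i, fderiv ℝ f x (Pi.single j 1) i ≤ 0)
    (A B : Fin n → ℝ)
    (S : Finset (Fin n)) (hin : ∀ i ∈ S, B i ≤ A i) (hout : ∀ i, i ∉ S → A i ≤ B i) :
    ∑ i ∈ S, (extF f A i - extF f B i) ≤ 0 := by
  have hsplit : ∀ i, extF f A i - extF f B i
      = (f (projPos A) i - f (projPos B) i)
        + ((projPos A i - A i) - (projPos B i - B i)) := by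
    intro i; simp [extF]; ring
  rw [Finset.sum_congr rfl (fun i _ => hsplit i), Finset.sum_add_distrib]
  have h1 : ∑ i ∈ S, (f (projPos A) i - f (projPos B) i) ≤ 0 := by
    apply sum_f_sub_nonpos U hUopen hUsub f hf hMetzler hcol _ _
      (projPos_nonneg A) (projPos_nonneg B) S
    · intro i hi
      exact max_le_max (hin i hi) (le_refl 0)
    · intro i hi
      exact max_le_max (hout i hi) (le_refl 0)
  have h2 : ∑ i ∈ S, ((projPos A i - A i) - (projPos B i - B i)) ≤ 0 := by
    apply Finset.sum_nonpos
    intro i hi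
    have hge := hin i hi
    simp only [projPos]
    rcases le_or_gt (A i) 0 with h | h <;> rcases le_or_gt (B i) 0 with h' | h'
    · rw [max_eq_right h, max_eq_right h']; linarith
    · rw [max_eq_right h, max_eq_left (le_of_lt h')]; linarith
    · rw [max_eq_left (le_of_lt h), max_eq_right h']; linarith
    · rw [max_eq_left (le_of_lt h), max_eq_left (le_of_lt h')]; linarith
  linarith

lemma sup'_powerset_sum (d : Fin n → ℝ) :
    (Finset.univ : Finset (Fin n)).powerset.sup'
      ⟨∅, Finset.empty_mem_powerset _⟩ (fun S => ∑ i ∈ S, d i)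
    = ∑ i, max (d i) 0 := by
  apply le_antisymm
  · apply Finset.sup'_le
    intro S _
    calc ∑ i ∈ S, d i ≤ ∑ i ∈ S, max (d i) 0 :=
          Finset.sum_le_sum (fun i _ => le_max_left _ _)
      _ ≤ ∑ i, max (d i) 0 :=
          Finset.sum_le_sum_of_subset_of_nonneg (Finset.subset_univ S)
            (fun i _ _ => le_max_right _ _)
  · have hkey : ∑ i, max (d i) 0 = ∑ i ∈ Finset.univ.filter (fun i => 0 < d i), d i := by
      rw [Finset.sum_filter]
      apply Finset.sum_congr rfl
      intro i _
      rcases le_or_gt (d i) 0 with h | h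
      · rw [max_eq_right h, if_neg (not_lt.mpr h)]
      · rw [max_eq_left (le_of_lt h), if_pos h]
    rw [hkey]
    exact Finset.le_sup' (fun S => ∑ i ∈ S, d i)
      (Finset.mem_powerset.mpr (Finset.filter_subset _ _))

/-- ℓ¹-nonexpansiveness of the positive part of the difference of two trajectories. -/
lemma pair_posPart_antitone
    (U : Set (Fin n → ℝ)) (hUopen : IsOpen U)
    (hUsub : {x : Fin n → ℝ | ∀ i, 0 ≤ x i} ⊆ U)
    (f : (Fin n → ℝ) → (Fin n → ℝ))
    (hf : ContDiffOn ℝ 1 f U)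
    (hMetzler : ∀ x : Fin n → ℝ, (∀ i, 0 ≤ x i) →
      ∀ i j, i ≠ j → 0 ≤ fderiv ℝ f x (Pi.single j 1) i)
    (hcol : ∀ x : Fin n → ℝ, (∀ i, 0 ≤ x i) →
      ∀ j, ∑ i, fderiv ℝ f x (Pi.single j 1) i ≤ 0)
    (u : Fin n → ℝ)
    (a b : ℝ → Fin n → ℝ) (t₁ t₂ : ℝ) (h12 : t₁ ≤ t₂)
    (ha : ∀ t ∈ Icc t₁ t₂, HasDerivAt a (u + extF f (a t)) t)
    (hb : ∀ t ∈ Icc t₁ t₂, HasDerivAt b (u + extF f (b t)) t) :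
    ∑ i, max (a t₂ i - b t₂ i) 0 ≤ ∑ i, max (a t₁ i - b t₁ i) 0 := by
  have hne : ((Finset.univ : Finset (Fin n)).powerset).Nonempty :=
    ⟨∅, Finset.empty_mem_powerset _⟩
  set gs : Finset (Fin n) → ℝ → ℝ := fun S t => ∑ i ∈ S, (a t i - b t i) with hgs
  set Gs : Finset (Fin n) → ℝ → ℝ :=
    fun S t => ∑ i ∈ S, (extF f (a t) i - extF f (b t) i) with hGs
  have hD : ∀ S, ∀ t ∈ Set.Icc t₁ t₂, HasDerivAt (gs S) (Gs S t) t := by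
    intro S t ht
    have hai := hasDerivAt_pi.mp (ha t ht)
    have hbi := hasDerivAt_pi.mp (hb t ht)
    have : ∀ i : Fin n, HasDerivAt (fun t => a t i - b t i)
        (extF f (a t) i - extF f (b t) i) t := by
      intro i
      have := (hai i).fun_sub (hbi i)
      simpa [Pi.add_apply, add_sub_add_left_eq_sub] using this
    exact HasDerivAt.fun_sum (fun i _ => this i)
  have hmain := sup'_le_of_active_deriv_nonpos hne gs Gs t₁ t₂ h12
    (fun S _ => fun t ht => ((hD S t ht).continuousAt).continuousWithinAt)
    (fun S _ => fun t ht => hD S t (Set.Ico_subset_Icc_self ht))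
    ?_
  · calc ∑ i, max (a t₂ i - b t₂ i) 0
        = Finset.univ.powerset.sup' hne (fun S => gs S t₂) := (sup'_powerset_sum _).symm
      _ ≤ Finset.univ.powerset.sup' hne (fun S => gs S t₁) := hmain
      _ = ∑ i, max (a t₁ i - b t₁ i) 0 := sup'_powerset_sum _
  · -- active branches have nonpositive derivative
    intro t ht S _ hact
    have hsup : ∀ S' : Finset (Fin n), gs S' t ≤ gs S t := by
      intro S'
      rw [hact]
      exact Finset.le_sup' (fun j => gs j t)
        (Finset.mem_powerset.mpr (Finset.subset_univ S'))
    have hin : ∀ i ∈ S, b t i ≤ a t i := by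
      intro i hi
      have h1 : ∑ i' ∈ S.erase i, (a t i' - b t i') ≤ ∑ i' ∈ S, (a t i' - b t i') :=
        hsup (S.erase i)
      rw [Finset.sum_erase_eq_sub hi] at h1
      linarith
    have hout : ∀ i, i ∉ S → a t i ≤ b t i := by
      intro i hi
      have h1 : ∑ i' ∈ insert i S, (a t i' - b t i') ≤ ∑ i' ∈ S, (a t i' - b t i') :=
        hsup (insert i S)
      rw [Finset.sum_insert hi] at h1
      linarith
    exact sum_extF_sub_nonpos U hUopen hUsub f hf hMetzler hcol _ _ S hin hout

end

section
variable {n : ℕ}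

lemma projPos_dist_le (a b : Fin n → ℝ) : dist (projPos a) (projPos b) ≤ dist a b := by
  rw [dist_pi_le_iff dist_nonneg]
  intro i
  calc dist (projPos a i) (projPos b i) ≤ dist (a i) (b i) := by
        simp only [projPos, Real.dist_eq]
        exact abs_max_sub_max_le_abs _ _ _
    _ ≤ dist a b := dist_le_pi_dist a b i

lemma projPos_zero : projPos (0 : Fin n → ℝ) = 0 := by
  funext i; simp [projPos]

lemma projPos_norm_le (y : Fin n → ℝ) : ‖projPos y‖ ≤ ‖y‖ := by
  have h := projPos_dist_le y 0
  rw [projPos_zero] at h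
  simpa [dist_eq_norm] using h

lemma orthant_isClosed : IsClosed {x : Fin n → ℝ | ∀ i, 0 ≤ x i} := by
  have : {x : Fin n → ℝ | ∀ i, 0 ≤ x i} = ⋂ i, {x : Fin n → ℝ | 0 ≤ x i} := by
    ext x; simp
  rw [this]
  exact isClosed_iInter (fun i => isClosed_le continuous_const (continuous_apply i))

/-- local Lipschitz bound for the extended vector field -/
lemma extF_lipschitzOnWith
    (U : Set (Fin n → ℝ)) (hUopen : IsOpen U)
    (hUsub : {x : Fin n → ℝ | ∀ i, 0 ≤ x i} ⊆ U)
    (f : (Fin n → ℝ) → (Fin n → ℝ)) (hf : ContDiffOn ℝ 1 f U)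
    (u : Fin n → ℝ)
    (R : ℝ) (hR : 0 ≤ R) :
    ∃ K : NNReal, LipschitzOnWith K (fun y => u + extF f y) (Metric.closedBall 0 R) := by
  set Q : Set (Fin n → ℝ) := {x | ∀ i, 0 ≤ x i} ∩ Metric.closedBall 0 R with hQdef
  have hQsub : Q ⊆ U := fun x hx => hUsub hx.1
  have hQconv : Convex ℝ Q := by
    apply Convex.inter _ (convex_closedBall _ _)
    have h1 : {x : Fin n → ℝ | ∀ i, 0 ≤ x i} = Set.pi Set.univ (fun _ => Set.Ici 0) := by
      ext x; simp [Set.mem_pi, Pi.le_def]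
    rw [h1]
    exact convex_pi (fun i _ => convex_Ici 0)
  have hQcomp : IsCompact Q := (isCompact_closedBall _ _).inter_left orthant_isClosed
  have hcontfd : ContinuousOn (fderiv ℝ f) U :=
    hf.continuousOn_fderiv_of_isOpen hUopen le_rfl
  obtain ⟨M, hM⟩ := hQcomp.exists_bound_of_continuousOn (hcontfd.mono hQsub)
  set Kf : NNReal := ⟨max M 0, le_max_right _ _⟩ with hKf
  have hlipf : LipschitzOnWith Kf f Q := by
    apply Convex.lipschitzOnWith_of_nnnorm_fderiv_le
      (fun x hx => (hf.differentiableOn one_ne_zero x (hQsub hx)).differentiableAt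
        (hUopen.mem_nhds (hQsub hx)))
      _ hQconv
    intro x hx
    rw [← NNReal.coe_le_coe]
    calc (‖fderiv ℝ f x‖₊ : ℝ) = ‖fderiv ℝ f x‖ := by simp
      _ ≤ M := hM x hx
      _ ≤ max M 0 := le_max_left _ _
  refine ⟨Kf + 2, ?_⟩
  rw [lipschitzOnWith_iff_dist_le_mul]
  intro a ha b hb
  have hpa : projPos a ∈ Q := ⟨projPos_nonneg a, by
    rw [Metric.mem_closedBall] at ha ⊢
    calc dist (projPos a) 0 = ‖projPos a‖ := by simp [dist_eq_norm]
      _ ≤ ‖a‖ := projPos_norm_le a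
      _ = dist a 0 := by simp [dist_eq_norm]
      _ ≤ R := ha⟩
  have hpb : projPos b ∈ Q := ⟨projPos_nonneg b, by
    rw [Metric.mem_closedBall] at hb ⊢
    calc dist (projPos b) 0 = ‖projPos b‖ := by simp [dist_eq_norm]
      _ ≤ ‖b‖ := projPos_norm_le b
      _ = dist b 0 := by simp [dist_eq_norm]
      _ ≤ R := hb⟩
  have hsplit : (u + extF f a) - (u + extF f b)
      = (f (projPos a) - f (projPos b)) + ((projPos a - projPos b) - (a - b)) := by
    simp only [extF]
    abel
  calc dist (u + extF f a) (u + extF f b)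
      = ‖(u + extF f a) - (u + extF f b)‖ := dist_eq_norm _ _
    _ = ‖(f (projPos a) - f (projPos b)) + ((projPos a - projPos b) - (a - b))‖ := by
        rw [hsplit]
    _ ≤ ‖f (projPos a) - f (projPos b)‖ + ‖(projPos a - projPos b) - (a - b)‖ :=
        norm_add_le _ _
    _ ≤ ‖f (projPos a) - f (projPos b)‖ + (‖projPos a - projPos b‖ + ‖a - b‖) := by
        linarith [norm_sub_le (projPos a - projPos b) (a - b)]
    _ ≤ Kf * dist a b + (dist a b + dist a b) := by
        have h1 : ‖f (projPos a) - f (projPos b)‖ ≤ Kf * dist a b := by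
          have := hlipf.dist_le_mul _ hpa _ hpb
          rw [dist_eq_norm] at this
          calc ‖f (projPos a) - f (projPos b)‖ ≤ Kf * dist (projPos a) (projPos b) := this
            _ ≤ Kf * dist a b := by
                apply mul_le_mul_of_nonneg_left (projPos_dist_le a b) (NNReal.coe_nonneg _)
        have h2 : ‖projPos a - projPos b‖ ≤ dist a b := by
          rw [← dist_eq_norm]; exact projPos_dist_le a b
        have h3 : ‖a - b‖ = dist a b := (dist_eq_norm a b).symm
        linarith
    _ = ((Kf + 2 : NNReal) : ℝ) * dist a b := by push_cast; ring

end

section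
variable {n : ℕ}

/-- Global forward solution for a locally-Lipschitz field, given an invariant bounded trap. -/
lemma exists_global_solution
    (v : (Fin n → ℝ) → (Fin n → ℝ))
    (hlip : ∀ R : ℝ, 0 ≤ R → ∃ K : NNReal, LipschitzOnWith K v (Metric.closedBall 0 R))
    (Kset : Set (Fin n → ℝ)) (R : ℝ) (hR : 0 < R) (hKR : Kset ⊆ Metric.closedBall 0 R)
    (y₀ : Fin n → ℝ) (hy₀ : y₀ ∈ Kset)
    (horacle : ∀ (g : ℝ → Fin n → ℝ) (T : ℝ), 0 ≤ T → g 0 = y₀ →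
      (∀ t ∈ Icc (0:ℝ) T, HasDerivAt g (v (g t)) t) → ∀ t ∈ Icc (0:ℝ) T, g t ∈ Kset) :
    ∃ g : ℝ → Fin n → ℝ, g 0 = y₀ ∧ (∀ t : ℝ, 0 ≤ t → HasDerivAt g (v (g t)) t) ∧
      (∀ t : ℝ, 0 ≤ t → g t ∈ Kset) := by
  obtain ⟨L, hL⟩ := hlip (R + 2) (by linarith)
  set C : ℝ := ‖v 0‖ + L * (R + 2) with hCdef
  have hC0 : 0 ≤ C := by positivity
  have hCbound : ∀ y ∈ Metric.closedBall (0 : Fin n → ℝ) (R + 2), ‖v y‖ ≤ C := by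
    intro y hy
    have h0mem : (0 : Fin n → ℝ) ∈ Metric.closedBall (0 : Fin n → ℝ) (R + 2) := by
      simp; linarith
    have hd := hL.dist_le_mul y hy 0 h0mem
    rw [Metric.mem_closedBall] at hy
    have h1 : ‖v y‖ - ‖v 0‖ ≤ dist (v y) (v 0) := by
      rw [dist_eq_norm]; exact norm_sub_norm_le _ _
    have h2 : (L : ℝ) * dist y 0 ≤ L * (R + 2) :=
      mul_le_mul_of_nonneg_left hy (NNReal.coe_nonneg L)
    rw [hCdef]; linarith
  set ε : ℝ := min 1 (1 / (C + 1)) with hεdef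
  have hε : 0 < ε := lt_min one_pos (by positivity)
  have hCε : C * ε ≤ 1 := by
    calc C * ε ≤ C * (1 / (C + 1)) :=
          mul_le_mul_of_nonneg_left (min_le_right _ _) hC0
      _ ≤ 1 := by
          rw [mul_one_div, div_le_one (by linarith)]; linarith
  set h : ℝ := ε / 2 with hhdef
  have hh : 0 < h := by positivity
  have hhε : h < ε := by rw [hhdef]; linarith
  have hlocal : ∀ (t₀ : ℝ) (w : Fin n → ℝ), w ∈ Metric.closedBall (0:Fin n → ℝ) (R + 1) →
      ∃ ψ : ℝ → Fin n → ℝ, ψ t₀ = w ∧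
        ∀ t ∈ Icc (t₀ - ε) (t₀ + ε),
          HasDerivWithinAt ψ (v (ψ t)) (Icc (t₀ - ε) (t₀ + ε)) t := by
    intro t₀ w hw
    suffices hpl : IsPicardLindelof (fun _ y => v y) (tmin := t₀ - ε) (tmax := t₀ + ε)
        ⟨t₀, by constructor <;> linarith⟩ w 1 0 ⟨C, hC0⟩ L by
      exact hpl.exists_eq_forall_mem_Icc_hasDerivWithinAt₀
    rw [Metric.mem_closedBall] at hw
    constructor
    · intro t _
      apply hL.mono
      intro y hy
      rw [Metric.mem_closedBall] at *
      calc dist y 0 ≤ dist y w + dist w 0 := dist_triangle _ _ _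
        _ ≤ 1 + (R + 1) := add_le_add hy hw
        _ ≤ R + 2 := by linarith
    · exact fun x _ => continuousOn_const
    · intro t _ y hy
      apply hCbound
      rw [Metric.mem_closedBall] at *
      calc dist y 0 ≤ dist y w + dist w 0 := dist_triangle _ _ _
        _ ≤ 1 + (R + 1) := add_le_add hy hw
        _ ≤ R + 2 := by linarith
    · have hmx : (t₀ + ε - t₀) ⊔ (t₀ - (t₀ - ε)) = ε := by
        rw [show t₀ + ε - t₀ = ε by ring, show t₀ - (t₀ - ε) = ε by ring, max_self]
      simp only [NNReal.coe_one, NNReal.coe_zero, sub_zero, NNReal.coe_mk]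
      rw [hmx]
      exact hCε
  -- stage-wise solutions
  have hstage : ∀ k : ℕ, ∃ g : ℝ → Fin n → ℝ, g 0 = y₀ ∧
      (∀ t ∈ Ioo (-ε) ((k : ℝ) * h + h), HasDerivAt g (v (g t)) t) ∧
      (∀ t ∈ Icc (0:ℝ) ((k : ℝ) * h), g t ∈ Kset) := by
    intro k
    induction k with
    | zero =>
      obtain ⟨ψ, hψ0, hψd⟩ := hlocal 0 y₀ (by
        have := hKR hy₀
        rw [Metric.mem_closedBall] at *
        linarith)
      refine ⟨ψ, hψ0, ?_, ?_⟩
      · intro t ht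
        simp only [Nat.cast_zero, zero_mul, zero_add] at ht
        have h1 := ht.1; have h2 := ht.2
        have := hψd t ⟨by linarith, by linarith⟩
        exact this.hasDerivAt (Icc_mem_nhds (by linarith) (by linarith))
      · intro t ht
        simp only [Nat.cast_zero, zero_mul] at ht
        have : t = 0 := le_antisymm ht.2 ht.1
        rw [this, hψ0]; exact hy₀
    | succ k IH =>
      obtain ⟨gk, hgk0, hgkd, hgkm⟩ := IH
      have hkh0 : (0:ℝ) ≤ (k:ℝ) * h := by positivity
      have hwK : gk ((k:ℝ) * h) ∈ Kset := hgkm _ ⟨hkh0, le_refl _⟩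
      have hwball : gk ((k:ℝ) * h) ∈ Metric.closedBall (0:Fin n → ℝ) (R + 1) := by
        have := hKR hwK
        rw [Metric.mem_closedBall] at *
        linarith
      obtain ⟨ψ, hψ0, hψd⟩ := hlocal ((k:ℝ) * h) (gk ((k:ℝ) * h)) hwball
      set T : ℝ := (k:ℝ) * h with hTdef
      set g' : ℝ → Fin n → ℝ := fun t => if t ≤ T then gk t else ψ t with hg'def
      have hg'eq_left : ∀ s, s ≤ T → g' s = gk s := fun s hs => if_pos hs
      have hg'eq_right : ∀ s, T ≤ s → g' s = ψ s := by
        intro s hs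
        rcases eq_or_lt_of_le hs with heq | hlt
        · rw [hg'def]; simp only
          rw [if_pos heq.symm.le, ← heq, hψ0]
        · rw [hg'def]; simp only
          rw [if_neg (not_le.mpr hlt)]
      have hg'T : g' T = gk T := hg'eq_left T (le_refl _)
      have hub : ((k:ℝ)+1) * h + h = T + ε := by rw [hTdef, hhdef]; ring
      have hcast : ((k+1 : ℕ) : ℝ) = (k:ℝ) + 1 := by push_cast; ring
      have hderiv' : ∀ t ∈ Ioo (-ε) (((k:ℝ)+1) * h + h), HasDerivAt g' (v (g' t)) t := by
        intro t ht
        rcases lt_trichotomy t T with hlt | heq | hgt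
        · have hd := hgkd t ⟨ht.1, by linarith⟩
          have hEE : g' =ᶠ[nhds t] gk := by
            filter_upwards [Iio_mem_nhds hlt] with s hs
            exact hg'eq_left s (le_of_lt hs)
          have hd2 := hd.congr_of_eventuallyEq hEE
          rwa [hg'eq_left t (le_of_lt hlt)]
        · subst heq
          have hdleft : HasDerivWithinAt g' (v (g' T)) (Iic T) T := by
            have hd := hgkd T ⟨by linarith, by linarith⟩
            rw [hg'T]
            exact (hd.hasDerivWithinAt (s := Iic T)).congr
              (fun s hs => hg'eq_left s hs) hg'T
          have hdright : HasDerivWithinAt g' (v (g' T)) (Ici T) T := by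
            have hIccmem : Icc (T - ε) (T + ε) ∈ nhdsWithin T (Ici T) :=
              Filter.mem_of_superset
                (Icc_mem_nhdsGE_of_mem (⟨le_refl T, by linarith⟩ : T ∈ Ico T (T + ε)))
                (Icc_subset_Icc (by linarith) (le_refl _))
            have hd := (hψd T ⟨by linarith, by linarith⟩).mono_of_mem_nhdsWithin hIccmem
            rw [hψ0] at hd
            rw [hg'T]
            exact hd.congr (fun s hs => hg'eq_right s hs)
              (by rw [hg'eq_right T (le_refl T), hψ0])
          have huni := hdleft.union hdright
          rw [Iic_union_Ici] at huni
          exact hasDerivWithinAt_univ.mp huni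
        · have htub : t < T + ε := by linarith [ht.2, hub]
          have hd := hψd t ⟨by linarith, by linarith⟩
          have hdAt : HasDerivAt ψ (v (ψ t)) t :=
            hd.hasDerivAt (Icc_mem_nhds (by linarith) (by linarith))
          have hEE : g' =ᶠ[nhds t] ψ := by
            filter_upwards [Ioi_mem_nhds hgt] with s hs
            exact hg'eq_right s (le_of_lt hs)
          have hd2 := hdAt.congr_of_eventuallyEq hEE
          rwa [hg'eq_right t (le_of_lt hgt)]
      have hg'0 : g' 0 = y₀ := by rw [hg'eq_left 0 hkh0, hgk0]
      have hmem' := horacle g' (((k:ℝ)+1) * h) (by positivity) hg'0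
        (fun s hs => hderiv' s ⟨by linarith [hs.1], by linarith [hs.2, hh]⟩)
      refine ⟨g', hg'0, ?_, ?_⟩
      · intro t ht
        rw [hcast] at ht
        exact hderiv' t ht
      · intro t ht
        rw [hcast] at ht
        exact hmem' t ht
  -- choose stage solutions
  choose gseq hg0 hgd hgm using hstage
  -- coherence via uniqueness
  have hcoh : ∀ k m : ℕ, k ≤ m → ∀ t ∈ Icc (0:ℝ) ((k:ℝ) * h), gseq k t = gseq m t := by
    intro k m hkm t ht
    have hkh0 : (0:ℝ) ≤ (k:ℝ) * h := by positivity
    have hkm' : (k:ℝ) * h ≤ (m:ℝ) * h := by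
      apply mul_le_mul_of_nonneg_right _ (le_of_lt hh)
      exact_mod_cast hkm
    apply ODE_solution_unique_of_mem_Icc_right
      (v := fun _ y => v y) (s := fun _ => Metric.closedBall (0 : Fin n → ℝ) (R + 2))
      (K := L) (fun _ _ => hL) _ _ _ _ _ _ _ ht
    · -- continuity of gseq k on Icc
      intro s hs
      have : HasDerivAt (gseq k) (v (gseq k s)) s := by
        apply hgd k s
        constructor
        · linarith [hs.1]
        · linarith [hs.2, hh]
      exact this.continuousAt.continuousWithinAt
    · intro s hs
      have : HasDerivAt (gseq k) (v (gseq k s)) s := by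
        apply hgd k s
        exact ⟨by linarith [hs.1], by linarith [hs.2.le, hh]⟩
      exact this.hasDerivWithinAt
    · intro s hs
      have := hKR (hgm k s ⟨hs.1, hs.2.le⟩)
      rw [Metric.mem_closedBall] at *
      linarith
    · intro s hs
      have : HasDerivAt (gseq m) (v (gseq m s)) s := by
        apply hgd m s
        constructor
        · linarith [hs.1]
        · have h1 : s ≤ (k:ℝ) * h := hs.2
          have h2 : (m:ℝ) * h < (m:ℝ)*h + h := by linarith
          linarith
      exact this.continuousAt.continuousWithinAt
    · intro s hs
      have : HasDerivAt (gseq m) (v (gseq m s)) s := by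
        apply hgd m s
        constructor
        · linarith [hs.1]
        · have h1 : s < (k:ℝ) * h := hs.2
          linarith
      exact this.hasDerivWithinAt
    · intro s hs
      have := hKR (hgm m s ⟨hs.1, le_trans hs.2.le hkm'⟩)
      rw [Metric.mem_closedBall] at *
      linarith
    · rw [hg0 k, hg0 m]
  -- the global solution
  set g : ℝ → Fin n → ℝ := fun t => gseq (⌊max t 0 / h⌋₊ + 1) t with hgdef
  have hidx : ∀ t : ℝ, 0 ≤ t → t < ((⌊max t 0 / h⌋₊ + 1 : ℕ) : ℝ) * h := by
    intro t ht0
    rw [max_eq_left ht0]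
    have h1 : t / h < (⌊t / h⌋₊ : ℝ) + 1 := Nat.lt_floor_add_one _
    push_cast
    calc t = (t / h) * h := by field_simp
      _ < ((⌊t / h⌋₊ : ℝ) + 1) * h := by
          apply mul_lt_mul_of_pos_right h1 hh
  have hgeq : ∀ (kk : ℕ) (t : ℝ), 0 ≤ t → t ≤ (kk:ℝ) * h → g t = gseq kk t := by
    intro kk t ht0 htk
    rw [hgdef]
    simp only
    set j := ⌊max t 0 / h⌋₊ + 1 with hjdef
    have htj : t ≤ (j:ℝ) * h := le_of_lt (hidx t ht0)
    rcases le_total j kk with hle | hle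
    · exact hcoh j kk hle t ⟨ht0, htj⟩
    · exact (hcoh kk j hle t ⟨ht0, htk⟩).symm
  refine ⟨g, ?_, ?_, ?_⟩
  · have h0 : g 0 = gseq 1 0 := by
      apply hgeq 1 0 (le_refl _)
      simp [hh.le]
    rw [h0, hg0]
  · intro t ht0
    set k := ⌊max t 0 / h⌋₊ + 1 with hkdef
    have htk : t < (k:ℝ) * h := hidx t ht0
    -- eventually equal to gseq k near t
    have hEE : g =ᶠ[nhds t] gseq k := by
      rcases eq_or_lt_of_le ht0 with heq | hlt
      · -- t = 0 : note k = 1 here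
        have hk1 : k = 1 := by
          rw [hkdef, ← heq]
          norm_num
        filter_upwards [Iio_mem_nhds (show t < (k:ℝ) * h from htk)] with s hs
        rcases le_or_gt s 0 with hs0 | hs0
        · -- on nonpositive s both equal gseq 1 s ... they agree since index is 1
          have hj : ⌊max s 0 / h⌋₊ + 1 = 1 := by
            rw [max_eq_right hs0]
            simp
          rw [hgdef]; simp only
          rw [hj, hk1]
        · exact hgeq k s (le_of_lt hs0) (le_of_lt hs)
      · filter_upwards [inter_mem (Ioi_mem_nhds hlt) (Iio_mem_nhds htk)] with s hs
        exact hgeq k s (le_of_lt hs.1) (le_of_lt hs.2)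
    have hd : HasDerivAt (gseq k) (v (gseq k t)) t := by
      apply hgd k t
      constructor
      · linarith
      · linarith
    have hd2 := hd.congr_of_eventuallyEq hEE
    have hgt : g t = gseq k t := hgeq k t ht0 (le_of_lt htk)
    rwa [hgt]
  · intro t ht0
    set k := ⌊max t 0 / h⌋₊ + 1 with hkdef
    have htk : t < (k:ℝ) * h := hidx t ht0
    have hgt : g t = gseq k t := hgeq k t ht0 (le_of_lt htk)
    rw [hgt]
    exact hgm k t ⟨ht0, le_of_lt htk⟩

end

section
variable {n : ℕ}

/-- termwise triangle inequality for positive parts -/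
lemma posPart_triangle (a b c : ℝ) : max (a - c) 0 ≤ max (a - b) 0 + max (b - c) 0 := by
  apply max_le
  · calc a - c = (a - b) + (b - c) := by ring
      _ ≤ max (a - b) 0 + max (b - c) 0 :=
        add_le_add (le_max_left _ _) (le_max_left _ _)
  · exact add_nonneg (le_max_right _ _) (le_max_right _ _)

lemma pi_norm_lt_of_abs_lt {z : Fin n → ℝ} {c : ℝ} (hc : 0 < c)
    (h : ∀ i, |z i| ≤ c / 2) : ‖z‖ < c := by
  have : ‖z‖ ≤ c / 2 := by
    apply pi_norm_le_iff_of_nonneg (by linarith) |>.mpr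
    intro i
    rw [Real.norm_eq_abs]
    exact h i
  linarith

end


set_option maxHeartbeats 4000000 in

/-- For a monotone dynamical flow network `ẋ = u + f(x)` (`f` continuously
differentiable on an open set containing the nonnegative orthant, with compartmental transposed
Jacobian on the orthant) with constant inflow `u ≥ 0`, an equilibrium `x* ≥ 0` that is locally
asymptotically stable relative to the orthant is globally asymptotically stable relative to the
orthant. -/
theorem monotone_flow_network_local_implies_global_stability {n : ℕ}
    (U : Set (Fin n → ℝ)) (hUopen : IsOpen U)
    (hUsub : {x : Fin n → ℝ | ∀ i, 0 ≤ x i} ⊆ U)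
    (f : (Fin n → ℝ) → (Fin n → ℝ))
    (hf : ContDiffOn ℝ 1 f U)
    (hMetzler : ∀ x : Fin n → ℝ, (∀ i, 0 ≤ x i) →
      ∀ i j, i ≠ j → 0 ≤ fderiv ℝ f x (Pi.single j 1) i)
    (hcol : ∀ x : Fin n → ℝ, (∀ i, 0 ≤ x i) →
      ∀ j, ∑ i, fderiv ℝ f x (Pi.single j 1) i ≤ 0)
    (u : Fin n → ℝ) (hu : ∀ i, 0 ≤ u i)
    (xstar : Fin n → ℝ) (hxstarnn : ∀ i, 0 ≤ xstar i)
    (heq : u + f xstar = 0)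
    (hloc : ∃ δ > (0 : ℝ), ∀ x : ℝ → Fin n → ℝ,
      (∀ t ≥ (0 : ℝ), HasDerivAt x (u + f (x t)) t) →
      (∀ t ≥ (0 : ℝ), ∀ i, 0 ≤ x t i) →
      ‖x 0 - xstar‖ < δ → Tendsto x atTop (nhds xstar))
    (x : ℝ → Fin n → ℝ)
    (hode : ∀ t ≥ (0 : ℝ), HasDerivAt x (u + f (x t)) t)
    (hxnn : ∀ t ≥ (0 : ℝ), ∀ i, 0 ≤ x t i) :
    Tendsto x atTop (nhds xstar) := by
  obtain ⟨δ, hδpos, hlocal⟩ := hloc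
  -- the extended field
  set v : (Fin n → ℝ) → (Fin n → ℝ) := fun y => u + extF f y with hvdef
  have hvlip : ∀ R : ℝ, 0 ≤ R → ∃ K : NNReal, LipschitzOnWith K v (Metric.closedBall 0 R) :=
    fun R hR => extF_lipschitzOnWith U hUopen hUsub f hf u R hR
  -- x solves the extended ODE
  have hxext : ∀ t : ℝ, 0 ≤ t → HasDerivAt x (u + extF f (x t)) t := by
    intro t ht
    have := hode t ht
    rwa [← extF_of_nonneg (f := f) (hxnn t ht)] at this
  -- xstar is an equilibrium of the extended field
  have hzero : u + extF f xstar = 0 := by rw [extF_of_nonneg (f := f) hxstarnn]; exact heq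
  have hstar_sol : ∀ t : ℝ, HasDerivAt (fun _ : ℝ => xstar) (u + extF f xstar) t := by
    intro t
    rw [hzero]
    exact hasDerivAt_const t xstar
  -- shifted trajectories solve the extended ODE
  have hshift_sol : ∀ T : ℝ, 0 ≤ T → ∀ t : ℝ, 0 ≤ t →
      HasDerivAt (fun s => x (s + T)) (u + extF f (x (t + T))) t := by
    intro T hT t ht
    have h1 := hxext (t + T) (by linarith)
    have h2 : HasDerivAt (fun s : ℝ => s + T) 1 t := by
      simpa using ((hasDerivAt_id t).add_const T)
    have := HasDerivAt.scomp t h1 h2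
    simpa [Function.comp_def] using this
  -- the two Lyapunov-type quantities
  set P : ℝ → ℝ := fun t => ∑ i, max (x t i - xstar i) 0 with hPdef
  set N : ℝ → ℝ := fun t => ∑ i, max (xstar i - x t i) 0 with hNdef
  have hPnonneg : ∀ t, 0 ≤ P t :=
    fun t => Finset.sum_nonneg (fun i _ => le_max_right _ _)
  have hNnonneg : ∀ t, 0 ≤ N t :=
    fun t => Finset.sum_nonneg (fun i _ => le_max_right _ _)
  have hPmono : ∀ t₁ t₂ : ℝ, 0 ≤ t₁ → t₁ ≤ t₂ → P t₂ ≤ P t₁ := by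
    intro t₁ t₂ h1 h12
    apply pair_posPart_antitone U hUopen hUsub f hf hMetzler hcol u x
      (fun _ => xstar) t₁ t₂ h12
    · intro t ht; exact hxext t (by linarith [ht.1])
    · intro t _; exact hstar_sol t
  have hNmono : ∀ t₁ t₂ : ℝ, 0 ≤ t₁ → t₁ ≤ t₂ → N t₂ ≤ N t₁ := by
    intro t₁ t₂ h1 h12
    apply pair_posPart_antitone U hUopen hUsub f hf hMetzler hcol u
      (fun _ => xstar) x t₁ t₂ h12
    · intro t _; exact hstar_sol t
    · intro t ht; exact hxext t (by linarith [ht.1])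
  -- limits of P and N
  set Pm : ℝ → ℝ := fun t => P (max t 0) with hPmdef
  have hPmanti : Antitone Pm := by
    intro s t hst
    exact hPmono (max s 0) (max t 0) (le_max_right _ _)
      (max_le_max hst (le_refl 0))
  have hPmbdd : BddBelow (Set.range Pm) := ⟨0, fun y ⟨t, ht⟩ => ht ▸ hPnonneg _⟩
  have hPlim : Tendsto Pm atTop (nhds (⨅ t, Pm t)) := tendsto_atTop_ciInf hPmanti hPmbdd
  set LP : ℝ := ⨅ t, Pm t with hLPdef
  have hPtend : Tendsto P atTop (nhds LP) := by
    apply hPlim.congr'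
    filter_upwards [eventually_ge_atTop (0:ℝ)] with t ht
    rw [hPmdef]; simp only [max_eq_left ht]
  set Nm : ℝ → ℝ := fun t => N (max t 0) with hNmdef
  have hNmanti : Antitone Nm := by
    intro s t hst
    exact hNmono (max s 0) (max t 0) (le_max_right _ _)
      (max_le_max hst (le_refl 0))
  have hNmbdd : BddBelow (Set.range Nm) := ⟨0, fun y ⟨t, ht⟩ => ht ▸ hNnonneg _⟩
  have hNlim : Tendsto Nm atTop (nhds (⨅ t, Nm t)) := tendsto_atTop_ciInf hNmanti hNmbdd
  set LN : ℝ := ⨅ t, Nm t with hLNdef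
  have hNtend : Tendsto N atTop (nhds LN) := by
    apply hNlim.congr'
    filter_upwards [eventually_ge_atTop (0:ℝ)] with t ht
    rw [hNmdef]; simp only [max_eq_left ht]
  have hLPnn : 0 ≤ LP := ge_of_tendsto hPtend (Eventually.of_forall (fun t => hPnonneg t))
  have hLNnn : 0 ≤ LN := ge_of_tendsto hNtend (Eventually.of_forall (fun t => hNnonneg t))
  have hPT : ∀ T : ℝ, Tendsto (fun t => P (t + T)) atTop (nhds LP) :=
    fun T => hPtend.comp (tendsto_atTop_add_const_right atTop T tendsto_id)
  have hNT : ∀ T : ℝ, Tendsto (fun t => N (t + T)) atTop (nhds LN) :=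
    fun T => hNtend.comp (tendsto_atTop_add_const_right atTop T tendsto_id)
  -- ============ STAGE 1 : LP = 0 ============
  have hstage1 : LP = 0 := by
    set s1 : ℝ := min (1/2) (δ / (2 * (P 0 + 1))) with hs1def
    have hs1pos : 0 < s1 :=
      lt_min (by norm_num) (div_pos hδpos (by linarith [hPnonneg 0]))
    have hs1le : s1 ≤ 1 := le_trans (min_le_left _ _) (by norm_num)
    have hs1P : s1 * P 0 ≤ δ / 2 := by
      have h1 : s1 ≤ δ / (2 * (P 0 + 1)) := min_le_right _ _
      have h2 : s1 * P 0 ≤ (δ / (2 * (P 0 + 1))) * P 0 :=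
        mul_le_mul_of_nonneg_right h1 (hPnonneg 0)
      have h3 : (δ / (2 * (P 0 + 1))) * P 0 ≤ δ / 2 := by
        rw [div_mul_eq_mul_div, div_le_div_iff₀ (by linarith [hPnonneg 0]) (by norm_num)]
        nlinarith [hPnonneg 0, hδpos]
      linarith
    have hkey : ∀ T : ℝ, 0 ≤ T → LP ≤ (1 - s1) * P T := by
      intro T hT
      set y : Fin n → ℝ := fun i => xstar i + s1 * max (x T i - xstar i) 0 with hydef
      set K1 : Set (Fin n → ℝ) :=
        {ξ | (∀ i, xstar i ≤ ξ i) ∧ ∑ i, (ξ i - xstar i) ≤ P 0} with hK1def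
      set R1 : ℝ := ‖xstar‖ + P 0 + 1 with hR1def
      have hR1pos : 0 < R1 := by positivity
      have hK1R : K1 ⊆ Metric.closedBall 0 R1 := by
        intro ξ hξ
        rw [Metric.mem_closedBall, dist_eq_norm, sub_zero]
        apply (pi_norm_le_iff_of_nonneg (le_of_lt hR1pos)).mpr
        intro i
        have h1 : xstar i ≤ ξ i := hξ.1 i
        have h2 : ξ i - xstar i ≤ P 0 := by
          calc ξ i - xstar i ≤ ∑ j, (ξ j - xstar j) :=
                Finset.single_le_sum (f := fun j => ξ j - xstar j)
                  (fun j _ => sub_nonneg.mpr (hξ.1 j)) (Finset.mem_univ i)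
            _ ≤ P 0 := hξ.2
        have h3 : |xstar i| ≤ ‖xstar‖ := by
          rw [← Real.norm_eq_abs]; exact norm_le_pi_norm xstar i
        rw [Real.norm_eq_abs, abs_le]
        constructor
        · rw [abs_le] at h3; rw [hR1def]; linarith
        · rw [abs_le] at h3; rw [hR1def]; linarith
      have hyK1 : y ∈ K1 := by
        constructor
        · intro i
          rw [hydef]
          simp only [le_add_iff_nonneg_right]
          exact mul_nonneg (le_of_lt hs1pos) (le_max_right _ _)
        · have hsum : ∑ i, (y i - xstar i) = s1 * P T := by
            rw [hydef, hPdef]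
            simp only [add_sub_cancel_left]
            rw [Finset.mul_sum]
          rw [hsum]
          calc s1 * P T ≤ 1 * P 0 :=
                mul_le_mul hs1le (hPmono 0 T (le_refl 0) hT) (hPnonneg T) (by norm_num)
            _ = P 0 := one_mul _
      have horacle1 : ∀ (g : ℝ → Fin n → ℝ) (T' : ℝ), 0 ≤ T' → g 0 = y →
          (∀ t ∈ Icc (0:ℝ) T', HasDerivAt g (v (g t)) t) →
          ∀ t ∈ Icc (0:ℝ) T', g t ∈ K1 := by
        intro g T' hT' hg0 hgd t ht
        have hgd' : ∀ τ ∈ Icc (0:ℝ) t, HasDerivAt g (u + extF f (g τ)) τ :=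
          fun τ hτ => hgd τ ⟨hτ.1, le_trans hτ.2 ht.2⟩
        constructor
        · intro i
          have hcomp := pair_posPart_antitone U hUopen hUsub f hf hMetzler hcol u
            (fun _ => xstar) g 0 t ht.1 (fun τ _ => hstar_sol τ) hgd'
          have h0 : ∑ i, max (xstar i - g 0 i) 0 = 0 := by
            rw [hg0]
            apply Finset.sum_eq_zero
            intro i _
            apply max_eq_right
            rw [hydef]
            simp only
            have : 0 ≤ s1 * max (x T i - xstar i) 0 :=
              mul_nonneg (le_of_lt hs1pos) (le_max_right _ _)
            linarith
          rw [h0] at hcomp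
          have hterm : max (xstar i - g t i) 0 ≤ 0 := by
            calc max (xstar i - g t i) 0
                ≤ ∑ j, max (xstar j - g t j) 0 :=
                  Finset.single_le_sum (f := fun j => max (xstar j - g t j) 0)
                    (fun j _ => le_max_right _ _) (Finset.mem_univ i)
              _ ≤ 0 := hcomp
          have := le_trans (le_max_left (xstar i - g t i) 0) hterm
          linarith
        · have hcomp := pair_posPart_antitone U hUopen hUsub f hf hMetzler hcol u
            g (fun _ => xstar) 0 t ht.1 hgd' (fun τ _ => hstar_sol τ)
          have h0 : ∑ i, max (g 0 i - xstar i) 0 = s1 * P T := by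
            rw [hg0, hPdef]
            simp only
            rw [Finset.mul_sum]
            apply Finset.sum_congr rfl
            intro i _
            rw [hydef]
            simp only [add_sub_cancel_left]
            rw [max_eq_left (mul_nonneg (le_of_lt hs1pos) (le_max_right _ _))]
          rw [h0] at hcomp
          calc ∑ i, (g t i - xstar i) ≤ ∑ i, max (g t i - xstar i) 0 :=
                Finset.sum_le_sum (fun i _ => le_max_left _ _)
            _ ≤ s1 * P T := hcomp
            _ ≤ 1 * P 0 :=
                mul_le_mul hs1le (hPmono 0 T (le_refl 0) hT) (hPnonneg T) (by norm_num)
            _ = P 0 := one_mul _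
      obtain ⟨φ, hφ0, hφd, hφK⟩ :=
        exists_global_solution v hvlip K1 R1 hR1pos hK1R y hyK1 horacle1
      have hφnn : ∀ t : ℝ, 0 ≤ t → ∀ i, 0 ≤ φ t i :=
        fun t ht i => le_trans (hxstarnn i) ((hφK t ht).1 i)
      have hφode : ∀ t ≥ (0:ℝ), HasDerivAt φ (u + f (φ t)) t := by
        intro t ht
        have hd := hφd t ht
        have hv' : v (φ t) = u + f (φ t) := by
          rw [hvdef]; simp only; rw [extF_of_nonneg (f := f) (hφnn t ht)]
        rwa [hv'] at hd
      have hball : ‖φ 0 - xstar‖ < δ := by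
        rw [hφ0]
        apply pi_norm_lt_of_abs_lt hδpos
        intro i
        rw [hydef]
        simp only [Pi.sub_apply, add_sub_cancel_left]
        rw [abs_of_nonneg (mul_nonneg (le_of_lt hs1pos) (le_max_right _ _))]
        calc s1 * max (x T i - xstar i) 0 ≤ s1 * P T := by
              apply mul_le_mul_of_nonneg_left _ (le_of_lt hs1pos)
              exact Finset.single_le_sum (f := fun j => max (x T j - xstar j) 0)
                (fun j _ => le_max_right _ _) (Finset.mem_univ i)
          _ ≤ s1 * P 0 :=
              mul_le_mul_of_nonneg_left (hPmono 0 T (le_refl 0) hT) (le_of_lt hs1pos)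
          _ ≤ δ / 2 := hs1P
      have hφtend : Tendsto φ atTop (nhds xstar) := hlocal φ hφode hφnn hball
      have hWi : ∀ i : Fin n, Tendsto (fun t => |φ t i - xstar i|) atTop (nhds 0) := by
        intro i
        have h1 : Tendsto (fun t => φ t i) atTop (nhds (xstar i)) :=
          ((continuous_apply i).continuousAt.tendsto).comp hφtend
        have h2 : Tendsto (fun t => φ t i - xstar i) atTop (nhds 0) := by
          simpa using h1.sub_const (xstar i)
        simpa using h2.abs
      have hW : Tendsto (fun t => ∑ i, |φ t i - xstar i|) atTop (nhds 0) := by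
        have := tendsto_finset_sum Finset.univ (fun i (_ : i ∈ Finset.univ) => hWi i)
        simpa using this
      have hest : ∀ t : ℝ, 0 ≤ t →
          P (t + T) ≤ (1 - s1) * P T + ∑ i, |φ t i - xstar i| := by
        intro t ht
        have htri : P (t + T) ≤ (∑ i, max (x (t + T) i - φ t i) 0)
            + ∑ i, max (φ t i - xstar i) 0 := by
          rw [hPdef]
          simp only
          rw [← Finset.sum_add_distrib]
          exact Finset.sum_le_sum (fun i _ => posPart_triangle _ _ _)
        have hpair := pair_posPart_antitone U hUopen hUsub f hf hMetzler hcol u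
          (fun sτ => x (sτ + T)) φ 0 t ht
          (fun τ hτ => hshift_sol T hT τ hτ.1)
          (fun τ hτ => hφd τ hτ.1)
        have hinit : ∑ i, max (x (0 + T) i - φ 0 i) 0 = (1 - s1) * P T := by
          rw [hφ0, hPdef]
          simp only [zero_add]
          rw [Finset.mul_sum]
          apply Finset.sum_congr rfl
          intro i _
          rw [hydef]
          simp only
          rcases le_or_gt (xstar i) (x T i) with hcase | hcase
          · have hmax : max (x T i - xstar i) 0 = x T i - xstar i :=
              max_eq_left (sub_nonneg.mpr hcase)
            rw [hmax]
            have h2 : x T i - (xstar i + s1 * (x T i - xstar i))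
                = (1 - s1) * (x T i - xstar i) := by ring
            rw [h2]
            apply max_eq_left
            have h3 := sub_nonneg.mpr hcase
            nlinarith
          · have hmax : max (x T i - xstar i) 0 = 0 :=
              max_eq_right (le_of_lt (sub_neg.mpr hcase))
            rw [hmax, mul_zero, mul_zero, add_zero]
            exact max_eq_right (by linarith)
        have hpair' : ∑ i, max (x (t + T) i - φ t i) 0 ≤ (1 - s1) * P T := by
          calc ∑ i, max (x (t + T) i - φ t i) 0
              ≤ ∑ i, max (x (0 + T) i - φ 0 i) 0 := hpair
            _ = (1 - s1) * P T := hinit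
        have habs : ∑ i, max (φ t i - xstar i) 0 ≤ ∑ i, |φ t i - xstar i| :=
          Finset.sum_le_sum (fun i _ => max_le (le_abs_self _) (abs_nonneg _))
        linarith
      have hlim1 : LP ≤ (1 - s1) * P T := by
        have hLHS : Tendsto (fun t => P (t + T)) atTop (nhds LP) := hPT T
        have hRHS : Tendsto (fun t => (1 - s1) * P T + ∑ i, |φ t i - xstar i|)
            atTop (nhds ((1 - s1) * P T + 0)) := (tendsto_const_nhds).add hW
        rw [add_zero] at hRHS
        apply le_of_tendsto_of_tendsto hLHS hRHS
        filter_upwards [eventually_ge_atTop (0:ℝ)] with t ht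
        exact hest t ht
      exact hlim1
    -- let T → ∞
    have hfin : LP ≤ (1 - s1) * LP := by
      have hRHS : Tendsto (fun T => (1 - s1) * P T) atTop (nhds ((1 - s1) * LP)) :=
        hPtend.const_mul _
      apply le_of_tendsto_of_tendsto tendsto_const_nhds hRHS
      filter_upwards [eventually_ge_atTop (0:ℝ)] with T hT
      exact hkey T hT
    nlinarith [hs1pos, hLPnn]
  -- ============ STAGE 2 : LN = 0 ============
  have hstage2 : LN = 0 := by
    set s2 : ℝ := min (1/2) (δ / (2 * (‖xstar‖ + 1))) with hs2def
    have hs2pos : 0 < s2 :=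
      lt_min (by norm_num) (div_pos hδpos (by positivity))
    have hs2le : s2 ≤ 1 := le_trans (min_le_left _ _) (by norm_num)
    have hs2x : s2 * ‖xstar‖ ≤ δ / 2 := by
      have h1 : s2 ≤ δ / (2 * (‖xstar‖ + 1)) := min_le_right _ _
      have h2 : s2 * ‖xstar‖ ≤ (δ / (2 * (‖xstar‖ + 1))) * ‖xstar‖ :=
        mul_le_mul_of_nonneg_right h1 (norm_nonneg _)
      have h3 : (δ / (2 * (‖xstar‖ + 1))) * ‖xstar‖ ≤ δ / 2 := by
        rw [div_mul_eq_mul_div, div_le_div_iff₀ (by positivity) (by norm_num)]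
        nlinarith [norm_nonneg xstar, hδpos]
      linarith
    have hkey : ∀ T : ℝ, 0 ≤ T → P T ≤ δ / 2 → LN ≤ (1 - s2) * N T := by
      intro T hT hPTsmall
      set y : Fin n → ℝ :=
        fun i => max (x T i) (xstar i - s2 * max (xstar i - x T i) 0) with hydef
      have hyx : ∀ i, x T i ≤ y i := fun i => le_max_left _ _
      have hycase1 : ∀ i, x T i ≤ xstar i →
          y i = xstar i - s2 * (xstar i - x T i) := by
        intro i hc
        rw [hydef]
        simp only
        rw [max_eq_left (sub_nonneg.mpr hc)]
        apply max_eq_right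
        nlinarith [sub_nonneg.mpr hc]
      have hycase2 : ∀ i, xstar i < x T i → y i = x T i := by
        intro i hc
        rw [hydef]
        simp only
        rw [max_eq_right (le_of_lt (sub_neg.mpr hc)), mul_zero, sub_zero]
        exact max_eq_left (le_of_lt hc)
      set K2 : Set (Fin n → ℝ) :=
        {ξ | (∀ i, 0 ≤ ξ i) ∧ ∀ i, ξ i ≤ xstar i + P 0} with hK2def
      set R2 : ℝ := ‖xstar‖ + P 0 + 1 with hR2def
      have hR2pos : 0 < R2 := by positivity
      have hK2R : K2 ⊆ Metric.closedBall 0 R2 := by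
        intro ξ hξ
        rw [Metric.mem_closedBall, dist_eq_norm, sub_zero]
        apply (pi_norm_le_iff_of_nonneg (le_of_lt hR2pos)).mpr
        intro i
        have h3 : |xstar i| ≤ ‖xstar‖ := by
          rw [← Real.norm_eq_abs]; exact norm_le_pi_norm xstar i
        rw [abs_le] at h3
        rw [Real.norm_eq_abs, abs_le]
        constructor
        · rw [hR2def]; have := hξ.1 i; have := hPnonneg 0; linarith
        · rw [hR2def]; have := hξ.2 i; linarith
      have hsinglePT : ∀ i, max (x T i - xstar i) 0 ≤ P T := by
        intro i
        exact Finset.single_le_sum (f := fun j => max (x T j - xstar j) 0)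
          (fun j _ => le_max_right _ _) (Finset.mem_univ i)
      have hyK2 : y ∈ K2 := by
        constructor
        · intro i
          exact le_trans (hxnn T hT i) (hyx i)
        · intro i
          rcases le_or_gt (x T i) (xstar i) with hc | hc
          · rw [hycase1 i hc]
            have h1 : 0 ≤ s2 * (xstar i - x T i) :=
              mul_nonneg (le_of_lt hs2pos) (sub_nonneg.mpr hc)
            have := hPnonneg 0
            linarith
          · rw [hycase2 i hc]
            have h1 : x T i - xstar i ≤ P T := by
              calc x T i - xstar i ≤ max (x T i - xstar i) 0 := le_max_left _ _
                _ ≤ P T := hsinglePT i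
            have h2 : P T ≤ P 0 := hPmono 0 T (le_refl 0) hT
            linarith
      have horacle2 : ∀ (g : ℝ → Fin n → ℝ) (T' : ℝ), 0 ≤ T' → g 0 = y →
          (∀ t ∈ Icc (0:ℝ) T', HasDerivAt g (v (g t)) t) →
          ∀ t ∈ Icc (0:ℝ) T', g t ∈ K2 := by
        intro g T' hT' hg0 hgd t ht
        have hgd' : ∀ τ ∈ Icc (0:ℝ) t, HasDerivAt g (u + extF f (g τ)) τ :=
          fun τ hτ => hgd τ ⟨hτ.1, le_trans hτ.2 ht.2⟩
        constructor
        · -- g t ≥ x (t + T) ≥ 0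
          intro i
          have hcomp := pair_posPart_antitone U hUopen hUsub f hf hMetzler hcol u
            (fun sτ => x (sτ + T)) g 0 t ht.1
            (fun τ hτ => hshift_sol T hT τ hτ.1) hgd'
          have h0 : ∑ i, max (x (0 + T) i - g 0 i) 0 = 0 := by
            rw [hg0]
            apply Finset.sum_eq_zero
            intro i _
            apply max_eq_right
            rw [zero_add]
            linarith [hyx i]
          rw [h0] at hcomp
          have hterm : max (x (t + T) i - g t i) 0 ≤ 0 := by
            calc max (x (t + T) i - g t i) 0
                ≤ ∑ j, max (x (t + T) j - g t j) 0 :=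
                  Finset.single_le_sum (f := fun j => max (x (t + T) j - g t j) 0)
                    (fun j _ => le_max_right _ _) (Finset.mem_univ i)
              _ ≤ 0 := hcomp
          have h1 := le_trans (le_max_left (x (t + T) i - g t i) 0) hterm
          have h2 := hxnn (t + T) (by linarith [ht.1]) i
          linarith
        · -- g t ≤ xstar + P 0
          intro i
          have hcomp := pair_posPart_antitone U hUopen hUsub f hf hMetzler hcol u
            g (fun _ => xstar) 0 t ht.1 hgd' (fun τ _ => hstar_sol τ)
          have h0 : ∑ i, max (g 0 i - xstar i) 0 = P T := by
            rw [hg0, hPdef]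
            simp only
            apply Finset.sum_congr rfl
            intro i _
            rcases le_or_gt (x T i) (xstar i) with hc | hc
            · rw [hycase1 i hc]
              have h1 : xstar i - s2 * (xstar i - x T i) - xstar i ≤ 0 := by
                nlinarith [sub_nonneg.mpr hc]
              rw [max_eq_right h1, max_eq_right (by linarith : x T i - xstar i ≤ 0)]
            · rw [hycase2 i hc]
          rw [h0] at hcomp
          have hterm : g t i - xstar i ≤ P T := by
            calc g t i - xstar i ≤ max (g t i - xstar i) 0 := le_max_left _ _
              _ ≤ ∑ j, max (g t j - xstar j) 0 :=
                  Finset.single_le_sum (f := fun j => max (g t j - xstar j) 0)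
                    (fun j _ => le_max_right _ _) (Finset.mem_univ i)
              _ ≤ P T := hcomp
          have h2 : P T ≤ P 0 := hPmono 0 T (le_refl 0) hT
          linarith
      obtain ⟨φ, hφ0, hφd, hφK⟩ :=
        exists_global_solution v hvlip K2 R2 hR2pos hK2R y hyK2 horacle2
      have hφnn : ∀ t : ℝ, 0 ≤ t → ∀ i, 0 ≤ φ t i := fun t ht i => (hφK t ht).1 i
      have hφode : ∀ t ≥ (0:ℝ), HasDerivAt φ (u + f (φ t)) t := by
        intro t ht
        have hd := hφd t ht
        have hv' : v (φ t) = u + f (φ t) := by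
          rw [hvdef]; simp only; rw [extF_of_nonneg (f := f) (hφnn t ht)]
        rwa [hv'] at hd
      have hball : ‖φ 0 - xstar‖ < δ := by
        rw [hφ0]
        apply pi_norm_lt_of_abs_lt hδpos
        intro i
        have h3 : |xstar i| ≤ ‖xstar‖ := by
          rw [← Real.norm_eq_abs]; exact norm_le_pi_norm xstar i
        simp only [Pi.sub_apply]
        rcases le_or_gt (x T i) (xstar i) with hc | hc
        · rw [hycase1 i hc]
          have h1 : xstar i - s2 * (xstar i - x T i) - xstar i = -(s2 * (xstar i - x T i)) := by
            ring
          rw [h1, abs_neg, abs_of_nonneg (mul_nonneg (le_of_lt hs2pos) (sub_nonneg.mpr hc))]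
          have h2 : xstar i - x T i ≤ xstar i := by linarith [hxnn T hT i]
          have h4 : s2 * (xstar i - x T i) ≤ s2 * ‖xstar‖ := by
            apply mul_le_mul_of_nonneg_left _ (le_of_lt hs2pos)
            rw [abs_le] at h3
            linarith
          linarith
        · rw [hycase2 i hc]
          rw [abs_of_nonneg (by linarith : (0:ℝ) ≤ x T i - xstar i)]
          calc x T i - xstar i ≤ max (x T i - xstar i) 0 := le_max_left _ _
            _ ≤ P T := hsinglePT i
            _ ≤ δ / 2 := hPTsmall
      have hφtend : Tendsto φ atTop (nhds xstar) := hlocal φ hφode hφnn hball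
      have hWi : ∀ i : Fin n, Tendsto (fun t => |φ t i - xstar i|) atTop (nhds 0) := by
        intro i
        have h1 : Tendsto (fun t => φ t i) atTop (nhds (xstar i)) :=
          ((continuous_apply i).continuousAt.tendsto).comp hφtend
        have h2 : Tendsto (fun t => φ t i - xstar i) atTop (nhds 0) := by
          simpa using h1.sub_const (xstar i)
        simpa using h2.abs
      have hW : Tendsto (fun t => ∑ i, |φ t i - xstar i|) atTop (nhds 0) := by
        have := tendsto_finset_sum Finset.univ (fun i (_ : i ∈ Finset.univ) => hWi i)
        simpa using this
      have hest : ∀ t : ℝ, 0 ≤ t →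
          N (t + T) ≤ (1 - s2) * N T + ∑ i, |φ t i - xstar i| := by
        intro t ht
        have htri : N (t + T) ≤ (∑ i, max (xstar i - φ t i) 0)
            + ∑ i, max (φ t i - x (t + T) i) 0 := by
          rw [hNdef]
          simp only
          rw [← Finset.sum_add_distrib]
          exact Finset.sum_le_sum (fun i _ => posPart_triangle _ _ _)
        have hpair := pair_posPart_antitone U hUopen hUsub f hf hMetzler hcol u
          φ (fun sτ => x (sτ + T)) 0 t ht
          (fun τ hτ => hφd τ hτ.1)
          (fun τ hτ => hshift_sol T hT τ hτ.1)
        have hinit : ∑ i, max (φ 0 i - x (0 + T) i) 0 = (1 - s2) * N T := by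
          rw [hφ0, hNdef]
          simp only [zero_add]
          rw [Finset.mul_sum]
          apply Finset.sum_congr rfl
          intro i _
          rcases le_or_gt (x T i) (xstar i) with hc | hc
          · rw [hycase1 i hc]
            have hmax : max (xstar i - x T i) 0 = xstar i - x T i :=
              max_eq_left (sub_nonneg.mpr hc)
            rw [hmax]
            have h2 : xstar i - s2 * (xstar i - x T i) - x T i
                = (1 - s2) * (xstar i - x T i) := by ring
            rw [h2]
            apply max_eq_left
            nlinarith [sub_nonneg.mpr hc]
          · rw [hycase2 i hc]
            have hmax : max (xstar i - x T i) 0 = 0 :=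
              max_eq_right (le_of_lt (sub_neg.mpr hc))
            rw [hmax, mul_zero, sub_self]
            exact max_self 0
        have hpair' : ∑ i, max (φ t i - x (t + T) i) 0 ≤ (1 - s2) * N T := by
          calc ∑ i, max (φ t i - x (t + T) i) 0
              ≤ ∑ i, max (φ 0 i - x (0 + T) i) 0 := hpair
            _ = (1 - s2) * N T := hinit
        have habs : ∑ i, max (xstar i - φ t i) 0 ≤ ∑ i, |φ t i - xstar i| := by
          apply Finset.sum_le_sum
          intro i _
          apply max_le _ (abs_nonneg _)
          rw [abs_sub_comm]
          exact le_abs_self _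
        linarith
      have hLHS : Tendsto (fun t => N (t + T)) atTop (nhds LN) := hNT T
      have hRHS : Tendsto (fun t => (1 - s2) * N T + ∑ i, |φ t i - xstar i|)
          atTop (nhds ((1 - s2) * N T + 0)) := (tendsto_const_nhds).add hW
      rw [add_zero] at hRHS
      apply le_of_tendsto_of_tendsto hLHS hRHS
      filter_upwards [eventually_ge_atTop (0:ℝ)] with t ht
      exact hest t ht
    -- let T → ∞
    have hfin : LN ≤ (1 - s2) * LN := by
      have hRHS : Tendsto (fun T => (1 - s2) * N T) atTop (nhds ((1 - s2) * LN)) :=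
        hNtend.const_mul _
      apply le_of_tendsto_of_tendsto tendsto_const_nhds hRHS
      have hev : ∀ᶠ T in atTop, P T ≤ δ / 2 := by
        have : ∀ᶠ T in atTop, P T < δ / 2 := by
          apply hPtend.eventually_lt_const
          rw [hstage1]
          linarith
        filter_upwards [this] with T hT
        exact le_of_lt hT
      filter_upwards [eventually_ge_atTop (0:ℝ), hev] with T hT hPT2
      exact hkey T hT hPT2
    nlinarith [hs2pos, hLNnn]
  -- ============ CONCLUSION ============
  have hPNtend : Tendsto (fun t => P t + N t) atTop (nhds 0) := by
    have := hPtend.add hNtend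
    rwa [hstage1, hstage2, add_zero] at this
  have hev : ∀ᶠ t in atTop, P t + N t < δ := hPNtend.eventually_lt_const hδpos
  obtain ⟨T, hT0, hTδ⟩ : ∃ T : ℝ, 0 ≤ T ∧ P T + N T < δ := by
    obtain ⟨T, h1, h2⟩ := ((eventually_ge_atTop (0:ℝ)).and hev).exists
    exact ⟨T, h1, h2⟩
  have hballT : ‖x T - xstar‖ < δ := by
    have habs : ∀ i, |x T i - xstar i| ≤ P T + N T := by
      intro i
      rcases le_or_gt 0 (x T i - xstar i) with hd | hd
      · rw [abs_of_nonneg hd]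
        calc x T i - xstar i ≤ max (x T i - xstar i) 0 := le_max_left _ _
          _ ≤ P T := Finset.single_le_sum (f := fun j => max (x T j - xstar j) 0)
              (fun j _ => le_max_right _ _) (Finset.mem_univ i)
          _ ≤ P T + N T := by linarith [hNnonneg T]
      · rw [abs_of_neg hd]
        calc -(x T i - xstar i) ≤ max (xstar i - x T i) 0 := by
              rw [neg_sub]; exact le_max_left _ _
          _ ≤ N T := Finset.single_le_sum (f := fun j => max (xstar j - x T j) 0)
              (fun j _ => le_max_right _ _) (Finset.mem_univ i)
          _ ≤ P T + N T := by linarith [hPnonneg T]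
    have hnorm : ‖x T - xstar‖ ≤ P T + N T := by
      apply (pi_norm_le_iff_of_nonneg (by linarith [hPnonneg T, hNnonneg T])).mpr
      intro i
      rw [Real.norm_eq_abs]
      exact habs i
    linarith
  -- shift trick
  have key : Tendsto (fun t => x (t + T)) atTop (nhds xstar) := by
    apply hlocal (fun t => x (t + T))
    · intro t ht
      have h1 := hode (t + T) (by linarith)
      have h2 : HasDerivAt (fun s : ℝ => s + T) 1 t := by
        simpa using ((hasDerivAt_id t).add_const T)
      have := HasDerivAt.scomp t h1 h2
      simpa [Function.comp_def] using this
    · intro t ht i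
      exact hxnn (t + T) (by linarith) i
    · simpa using hballT
  have hshift : Tendsto (fun t : ℝ => t - T) atTop atTop :=
    tendsto_atTop_add_const_right _ (-T) tendsto_id
  have h2 := key.comp hshift
  have h3 : ((fun t => x (t + T)) ∘ fun t => t - T) = x := by
    funext s; simp [Function.comp]
  rwa [h3] at h2
end

section
/- Let R ∈ ℝ^{n×n} be substochastic (R_{ij} ≥ 0, Σ_j R_{ij} ≤ 1 for all i) and outflow-connected (in the digraph with an edge (i,j) whenever R_{ij} > 0, every node i either satisfies Σ_j R_{ij} < 1 or has a directed path to some node j with Σ_k R_{jk} < 1). For each i let φ_i : [0,∞) → [0,∞) be continuously differentiable with φ_i(0) = 0, φ_i'(y) > 0 for all y ≥ 0, and sup_{y≥0} φ_i(y) = C_i ∈ (0,∞). Let u ∈ ℝⁿ₊ and suppose z* = (I − Rᵀ)⁻¹u satisfies z*_i < C_i for every i, and let x* be the unique point of ℝⁿ₊ with φ_i(x*_i) = z*_i for all i. Then x* is a globally asymptotically stable equilibrium of ẋ = u − (I − Rᵀ)φ(x) on ℝⁿ₊: every differentiable solution x : [0,∞) → ℝⁿ₊ converges to x* as t → ∞.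 -/
open Matrix Filter

section Aux
variable {n : ℕ} (R : Matrix (Fin n) (Fin n) ℝ)

private lemma powEntry_nonneg (hnn : ∀ i j, 0 ≤ R i j) :
    ∀ k i j, 0 ≤ (R ^ k) i j := by
  intro k
  induction k with
  | zero => intro i j; simp [Matrix.one_apply]; split <;> norm_num
  | succ k ih =>
    intro i j
    rw [pow_succ, Matrix.mul_apply]
    exact Finset.sum_nonneg fun l _ => mul_nonneg (ih i l) (hnn l j)

private lemma rowSum_pow_le_one (hnn : ∀ i j, 0 ≤ R i j) (hsub : ∀ i, ∑ j, R i j ≤ 1) :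
    ∀ k i, ∑ j, (R ^ k) i j ≤ 1 := by
  intro k
  induction k with
  | zero => intro i; simp [Matrix.one_apply]
  | succ k ih =>
    intro i
    have : ∑ j, (R ^ (k+1)) i j = ∑ l, R i l * ∑ j, (R ^ k) l j := by
      rw [pow_succ']
      simp only [Matrix.mul_apply, Finset.mul_sum]
      rw [Finset.sum_comm]
    rw [this]
    calc ∑ l, R i l * ∑ j, (R ^ k) l j ≤ ∑ l, R i l * 1 :=
          Finset.sum_le_sum fun l _ => mul_le_mul_of_nonneg_left (ih l) (hnn i l)
      _ ≤ 1 := by simpa using hsub i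

private lemma rowSum_pow_antitone (hnn : ∀ i j, 0 ≤ R i j) (hsub : ∀ i, ∑ j, R i j ≤ 1) :
    ∀ k i, ∑ j, (R ^ (k+1)) i j ≤ ∑ j, (R ^ k) i j := by
  intro k
  induction k with
  | zero => intro i; simpa [Matrix.one_apply] using hsub i
  | succ k ih =>
    intro i
    have e : ∀ m, ∑ j, (R ^ (m+1)) i j = ∑ l, R i l * ∑ j, (R ^ m) l j := by
      intro m
      rw [pow_succ']
      simp only [Matrix.mul_apply, Finset.mul_sum]
      rw [Finset.sum_comm]
    rw [e (k+1), e k]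
    exact Finset.sum_le_sum fun l _ => mul_le_mul_of_nonneg_left (ih l) (hnn i l)

private lemma rowSum_pow_lt_one_of_reach (hnn : ∀ i j, 0 ≤ R i j)
    (hsub : ∀ i, ∑ j, R i j ≤ 1) {i j0 : Fin n}
    (hpath : Relation.ReflTransGen (fun a b => 0 < R a b) i j0)
    (hdef : ∑ k, R j0 k < 1) :
    ∃ m, ∀ m' ≥ m, ∑ j, (R ^ m') i j < 1 := by
  have key : ∃ m, ∑ j, (R ^ m) i j < 1 := by
    induction hpath using Relation.ReflTransGen.head_induction_on with
    | refl => exact ⟨1, by simpa [pow_one] using hdef⟩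
    | head hab _ ih =>
      rename_i a b _
      obtain ⟨m, hm⟩ := ih
      refine ⟨m + 1, ?_⟩
      have e : ∑ j, (R ^ (m+1)) a j = ∑ l, R a l * ∑ j, (R ^ m) l j := by
        rw [pow_succ']
        simp only [Matrix.mul_apply, Finset.mul_sum]
        rw [Finset.sum_comm]
      rw [e]
      have h1 : ∑ l, R a l * ∑ j, (R ^ m) l j < ∑ l, R a l * 1 := by
        refine Finset.sum_lt_sum (fun l _ => mul_le_mul_of_nonneg_left
          (rowSum_pow_le_one R hnn hsub m l) (hnn a l)) ⟨b, Finset.mem_univ b, ?_⟩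
        exact mul_lt_mul_of_pos_left hm hab
      calc ∑ l, R a l * ∑ j, (R ^ m) l j < ∑ l, R a l * 1 := h1
        _ ≤ 1 := by simpa using hsub a
  obtain ⟨m, hm⟩ := key
  refine ⟨m, fun m' hm' => ?_⟩
  have : ∀ d, ∑ j, (R ^ (m + d)) i j ≤ ∑ j, (R ^ m) i j := by
    intro d
    induction d with
    | zero => simp
    | succ d ih => exact le_trans (rowSum_pow_antitone R hnn hsub (m+d) i) ih
  obtain ⟨d, rfl⟩ := Nat.exists_eq_add_of_le hm'
  exact lt_of_le_of_lt (this d) hm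

end Aux
section Aux2
variable {n : ℕ} (R : Matrix (Fin n) (Fin n) ℝ)


private lemma exists_weights (hn : 0 < n) (hnn : ∀ i j, 0 ≤ R i j)
    (hsub : ∀ i, ∑ j, R i j ≤ 1)
    (hout : ∀ i : Fin n, ∃ j : Fin n,
      Relation.ReflTransGen (fun a b => 0 < R a b) i j ∧ ∑ k, R j k < 1) :
    ∃ z w : Fin n → ℝ, (∀ i, 1 ≤ z i) ∧ (∀ i, 1 ≤ w i) ∧
      (∀ i, ∑ j, R i j * z j < z i) ∧ (∀ i, ∑ j, R j i * w j < w i) := by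
  have hne : Nonempty (Fin n) := ⟨⟨0, hn⟩⟩
  have hchoice : ∀ i : Fin n, ∃ m, ∀ m' ≥ m, ∑ j, (R ^ m') i j < 1 := fun i => by
    obtain ⟨j0, hp, hd⟩ := hout i
    exact rowSum_pow_lt_one_of_reach R hnn hsub hp hd
  choose m hm using hchoice
  have huniv : (Finset.univ : Finset (Fin n)).Nonempty := Finset.univ_nonempty
  set M : ℕ := (Finset.univ.sup m) + 1 with hM
  have hMpos : 1 ≤ M := Nat.le_add_left 1 _
  have hMlt : ∀ i, ∑ j, (R ^ M) i j < 1 := fun i =>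
    hm i M (le_trans (Finset.le_sup (Finset.mem_univ i)) (Nat.le_succ _))
  obtain ⟨i0, hi0⟩ := Finset.exists_max_image Finset.univ (fun i => ∑ j, (R ^ M) i j) huniv
  set θ : ℝ := ∑ j, (R ^ M) i0 j with hθ
  have hθ1 : θ < 1 := hMlt i0
  have hθ0 : 0 ≤ θ := Finset.sum_nonneg fun j _ => powEntry_nonneg R hnn M i0 j
  have hθle : ∀ i, ∑ j, (R ^ M) i j ≤ θ := fun i => hi0.2 i (Finset.mem_univ i)
  have hgeo : ∀ k i, ∑ j, (R ^ (k * M)) i j ≤ θ ^ k := by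
    intro k
    induction k with
    | zero => intro i; simpa using rowSum_pow_le_one R hnn hsub 0 i
    | succ k ih =>
      intro i
      have e : (k+1) * M = M + k * M := by ring
      have e2 : ∑ j, (R ^ ((k+1) * M)) i j = ∑ l, (R ^ M) i l * ∑ j, (R ^ (k*M)) l j := by
        rw [e, pow_add]
        simp only [Matrix.mul_apply, Finset.mul_sum]
        rw [Finset.sum_comm]
      rw [e2]
      calc ∑ l, (R ^ M) i l * ∑ j, (R ^ (k*M)) l j
          ≤ ∑ l, (R ^ M) i l * θ ^ k :=
            Finset.sum_le_sum fun l _ =>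
              mul_le_mul_of_nonneg_left (ih l) (powEntry_nonneg R hnn M i l)
        _ = (∑ l, (R ^ M) i l) * θ ^ k := by rw [Finset.sum_mul]
        _ ≤ θ * θ ^ k := mul_le_mul_of_nonneg_right (hθle i) (pow_nonneg hθ0 k)
        _ = θ ^ (k+1) := by ring
  have hentry : ∀ k i j, (R ^ (k * M)) i j ≤ θ ^ k := by
    intro k i j
    calc (R ^ (k*M)) i j ≤ ∑ j', (R ^ (k*M)) i j' :=
          Finset.single_le_sum (fun l _ => powEntry_nonneg R hnn _ i l) (Finset.mem_univ j)
      _ ≤ θ ^ k := hgeo k i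
  obtain ⟨k, hk⟩ : ∃ k : ℕ, θ ^ k < 1 / n := exists_pow_lt_of_lt_one (by positivity) hθ1
  set N : ℕ := k * M with hN
  have hcol : ∀ i, ∑ j, (R ^ N) j i < 1 := by
    intro i
    calc ∑ j, (R ^ N) j i ≤ ∑ _j : Fin n, θ ^ k :=
          Finset.sum_le_sum fun j _ => hentry k j i
      _ = n * θ ^ k := by simp [Finset.sum_const, mul_comm]
      _ < n * (1/n) := by
          apply mul_lt_mul_of_pos_left hk
          exact_mod_cast hn
      _ = 1 := by field_simp
  have hone : ∀ i : Fin n, ∑ j, (1 : Matrix (Fin n) (Fin n) ℝ) j i = 1 := by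
    intro i
    simp [Matrix.one_apply, Finset.sum_ite_eq]
  have hone' : ∀ i : Fin n, ∑ j, (1 : Matrix (Fin n) (Fin n) ℝ) i j = 1 := by
    intro i
    simp [Matrix.one_apply, Finset.sum_ite_eq']
  have hNpos : 1 ≤ N := by
    rcases Nat.eq_zero_or_pos N with h | h
    · exfalso
      have h2 := hcol ⟨0, hn⟩
      rw [h, pow_zero] at h2
      rw [hone ⟨0, hn⟩] at h2
      exact lt_irrefl 1 h2
    · exact h
  refine ⟨fun i => ∑ l ∈ Finset.range M, ∑ j, (R ^ l) i j,
          fun i => ∑ l ∈ Finset.range N, ∑ j, (R ^ l) j i, ?_, ?_, ?_, ?_⟩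
  · intro i
    calc (1:ℝ) = ∑ j, (R ^ 0) i j := by rw [pow_zero, hone' i]
      _ ≤ _ := Finset.single_le_sum
          (f := fun l => ∑ j, (R ^ l) i j)
          (fun l _ => Finset.sum_nonneg fun j _ => powEntry_nonneg R hnn l i j)
          (Finset.mem_range.mpr hMpos)
  · intro i
    calc (1:ℝ) = ∑ j, (R ^ 0) j i := by rw [pow_zero, hone i]
      _ ≤ _ := Finset.single_le_sum
          (f := fun l => ∑ j, (R ^ l) j i)
          (fun l _ => Finset.sum_nonneg fun j _ => powEntry_nonneg R hnn l j i)
          (Finset.mem_range.mpr hNpos)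
  · intro i
    set a : ℕ → ℝ := fun l => ∑ j, (R ^ l) i j with ha
    have step : ∀ l, (∑ x, ∑ y, R i x * (R ^ l) x y) = a (l+1) := by
      intro l
      rw [ha]
      simp only [pow_succ', Matrix.mul_apply]
      exact Finset.sum_comm
    have lhs : ∑ j, R i j * ∑ l ∈ Finset.range M, ∑ j', (R ^ l) j j'
        = ∑ l ∈ Finset.range M, a (l+1) := by
      simp only [Finset.mul_sum]
      rw [Finset.sum_comm]
      refine Finset.sum_congr rfl fun l _ => ?_
      rw [← step l]
    rw [lhs]
    have h1 := Finset.sum_range_succ' a M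
    have h2 := Finset.sum_range_succ a M
    have haM : a M < 1 := hMlt i
    have ha0 : a 0 = 1 := by rw [ha]; simp only [pow_zero]; exact hone' i
    have : ∑ l ∈ Finset.range M, a (l+1) = (∑ l ∈ Finset.range M, a l) + a M - a 0 := by
      linarith [h1, h2]
    rw [this, ha0]
    have hz : (fun i => ∑ l ∈ Finset.range M, ∑ j, (R ^ l) i j) i
        = ∑ l ∈ Finset.range M, a l := rfl
    rw [hz]
    linarith
  · intro i
    set b : ℕ → ℝ := fun l => ∑ j, (R ^ l) j i with hb
    have step : ∀ l, (∑ x, ∑ y, R x i * (R ^ l) y x) = b (l+1) := by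
      intro l
      rw [hb]
      simp only [pow_succ, Matrix.mul_apply]
      rw [Finset.sum_comm]
      refine Finset.sum_congr rfl fun p _ => ?_
      refine Finset.sum_congr rfl fun q _ => ?_
      ring
    have lhs : ∑ j, R j i * ∑ l ∈ Finset.range N, ∑ j', (R ^ l) j' j
        = ∑ l ∈ Finset.range N, b (l+1) := by
      simp only [Finset.mul_sum]
      rw [Finset.sum_comm]
      refine Finset.sum_congr rfl fun l _ => ?_
      rw [← step l]
    rw [lhs]
    have haN : b N < 1 := hcol i
    have hb0 : b 0 = 1 := by rw [hb]; simp only [pow_zero]; exact hone i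
    have h1 := Finset.sum_range_succ' b N
    have h2 := Finset.sum_range_succ b N
    have : ∑ l ∈ Finset.range N, b (l+1) = (∑ l ∈ Finset.range N, b l) + b N - b 0 := by
      linarith [h1, h2]
    rw [this, hb0]
    have hz : (fun i => ∑ l ∈ Finset.range N, ∑ j, (R ^ l) j i) i
        = ∑ l ∈ Finset.range N, b l := rfl
    rw [hz]
    linarith
end Aux2

section Aux3
variable {n : ℕ} (R : Matrix (Fin n) (Fin n) ℝ)

private lemma quad_bound (hn : 0 < n) (hnn : ∀ i j, 0 ≤ R i j)
    (z w : Fin n → ℝ) (hz1 : ∀ i, 1 ≤ z i) (hw1 : ∀ i, 1 ≤ w i)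
    (hzR : ∀ i, ∑ j, R i j * z j < z i) (hwR : ∀ i, ∑ j, R j i * w j < w i) :
    ∃ μ : ℝ, 0 < μ ∧ ∀ e : Fin n → ℝ,
      μ * ∑ i, (e i)^2 ≤ ∑ i, (z i / w i) * (e i * (e i - ∑ j, R j i * e j)) := by
  have hne : Nonempty (Fin n) := ⟨⟨0, hn⟩⟩
  have hwpos : ∀ i, 0 < w i := fun i => lt_of_lt_of_le one_pos (hw1 i)
  have hzpos : ∀ i, 0 < z i := fun i => lt_of_lt_of_le one_pos (hz1 i)
  set c : Fin n → ℝ := fun i =>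
    (z i * (w i - ∑ j, R j i * w j) + w i * (z i - ∑ j, R i j * z j)) / (2 * (w i)^2)
    with hc
  have hcpos : ∀ i, 0 < c i := by
    intro i
    apply div_pos
    · nlinarith [hwR i, hzR i, hzpos i, hwpos i]
    · have := hwpos i
      positivity
  obtain ⟨i0, _, hmin⟩ := Finset.exists_min_image Finset.univ c Finset.univ_nonempty
  refine ⟨c i0, hcpos i0, ?_⟩
  intro e
  have expand : ∑ i, (z i / w i) * (e i * (e i - ∑ j, R j i * e j))
      = (∑ i, (z i / w i) * (e i)^2) - ∑ i, ∑ j, (z i / w i) * R j i * (e i * e j) := by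
    rw [← Finset.sum_sub_distrib]
    refine Finset.sum_congr rfl fun i _ => ?_
    rw [mul_sub, Finset.mul_sum, mul_sub, Finset.mul_sum]
    congr 1
    · ring
    · exact Finset.sum_congr rfl fun j _ => by ring
  have amgm : ∀ (p q a b : ℝ), 0 < p → 0 < q →
      a * b ≤ q/(2*p)*a^2 + p/(2*q)*b^2 := by
    intro p q a b hp hq
    have h : q/(2*p)*a^2 + p/(2*q)*b^2 - a*b = (q*a - p*b)^2/(2*p*q) := by
      field_simp
      ring
    nlinarith [div_nonneg (sq_nonneg (q*a - p*b)) (by positivity : (0:ℝ) ≤ 2*p*q)]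
  have cross_le : ∑ i, ∑ j, (z i / w i) * R j i * (e i * e j)
      ≤ ∑ i, ∑ j, (z i / w i) * R j i *
        (w j/(2*w i) * (e i)^2 + w i/(2*w j) * (e j)^2) := by
    refine Finset.sum_le_sum fun i _ => Finset.sum_le_sum fun j _ => ?_
    have h0 : 0 ≤ (z i / w i) * R j i := by
      have := hwpos i; have := hzpos i; have := hnn j i
      positivity
    exact mul_le_mul_of_nonneg_left (amgm (w i) (w j) (e i) (e j) (hwpos i) (hwpos j)) h0
  have split1 : ∑ i, ∑ j, (z i / w i) * R j i * (w j/(2*w i) * (e i)^2)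
      = ∑ i, (z i/(2*(w i)^2)) * (e i)^2 * ∑ j, R j i * w j := by
    refine Finset.sum_congr rfl fun i _ => ?_
    rw [Finset.mul_sum]
    refine Finset.sum_congr rfl fun j _ => ?_
    have hwi := (hwpos i).ne'
    field_simp
  have split2 : ∑ i, ∑ j, (z i / w i) * R j i * (w i/(2*w j) * (e j)^2)
      = ∑ i, ((e i)^2/(2*w i)) * ∑ j, R i j * z j := by
    rw [Finset.sum_comm]
    refine Finset.sum_congr rfl fun j _ => ?_
    rw [Finset.mul_sum]
    refine Finset.sum_congr rfl fun i _ => ?_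
    have hwi := (hwpos i).ne'
    have hwj := (hwpos j).ne'
    field_simp
  have split : ∑ i, ∑ j, (z i / w i) * R j i *
        (w j/(2*w i) * (e i)^2 + w i/(2*w j) * (e j)^2)
      = (∑ i, (z i/(2*(w i)^2)) * (e i)^2 * ∑ j, R j i * w j)
        + ∑ i, ((e i)^2/(2*w i)) * ∑ j, R i j * z j := by
    simp only [mul_add, Finset.sum_add_distrib]
    rw [split1, split2]
  have coeff_eq : ∀ i : Fin n,
      (z i / w i) * (e i)^2 - ((z i/(2*(w i)^2)) * (e i)^2 * ∑ j, R j i * w j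
        + ((e i)^2/(2*w i)) * ∑ j, R i j * z j) = c i * (e i)^2 := by
    intro i
    have hwi := (hwpos i).ne'
    rw [hc]
    field_simp
    ring
  have final : ∑ i, c i * (e i)^2
      = (∑ i, (z i / w i) * (e i)^2)
        - ((∑ i, (z i/(2*(w i)^2)) * (e i)^2 * ∑ j, R j i * w j)
          + ∑ i, ((e i)^2/(2*w i)) * ∑ j, R i j * z j) := by
    rw [← Finset.sum_add_distrib, ← Finset.sum_sub_distrib]
    exact Finset.sum_congr rfl fun i _ => (coeff_eq i).symm
  have lower : c i0 * ∑ i, (e i)^2 ≤ ∑ i, c i * (e i)^2 := by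
    rw [Finset.mul_sum]
    exact Finset.sum_le_sum fun i _ =>
      mul_le_mul_of_nonneg_right (hmin i (Finset.mem_univ i)) (sq_nonneg _)
  rw [expand]
  calc c i0 * ∑ i, (e i)^2 ≤ ∑ i, c i * (e i)^2 := lower
    _ = _ := final
    _ ≤ _ := by
        have h := le_trans cross_le (le_of_eq split)
        linarith
end Aux3

section Aux4
variable {n : ℕ} (R : Matrix (Fin n) (Fin n) ℝ)

private lemma inv_eq (hn : 0 < n) (hnn : ∀ i j, 0 ≤ R i j)
    (w : Fin n → ℝ) (hw1 : ∀ i, 1 ≤ w i) (hwR : ∀ i, ∑ j, R j i * w j < w i)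
    (u : Fin n → ℝ) :
    (1 - Rᵀ).mulVec ((1 - Rᵀ)⁻¹.mulVec u) = u := by
  have hne : Nonempty (Fin n) := ⟨⟨0, hn⟩⟩
  have hwpos : ∀ i, 0 < w i := fun i => lt_of_lt_of_le one_pos (hw1 i)
  have happ : ∀ v : Fin n → ℝ, ∀ i, ((1 - Rᵀ).mulVec v) i = v i - ∑ j, R j i * v j := by
    intro v i
    simp only [Matrix.mulVec, dotProduct, Matrix.sub_apply, Matrix.one_apply,
      Matrix.transpose_apply, sub_mul, ite_mul, one_mul, zero_mul, Finset.sum_sub_distrib,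
      Finset.sum_ite_eq, Finset.mem_univ, if_true]
  have hinj : ∀ v : Fin n → ℝ, (1 - Rᵀ).mulVec v = 0 → v = 0 := by
    intro v hv
    by_contra hvne
    have hv' : ∀ i, v i = ∑ j, R j i * v j := by
      intro i
      have := congrFun hv i
      rw [happ v i] at this
      simpa [sub_eq_zero] using this
    obtain ⟨i1, hi1⟩ : ∃ i, v i ≠ 0 := by
      by_contra h
      push_neg at h
      exact hvne (funext h)
    obtain ⟨i0, _, hmax⟩ := Finset.exists_max_image Finset.univ
      (fun i => |v i| / w i) Finset.univ_nonempty
    set ρ : ℝ := |v i0| / w i0 with hρ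
    have hρpos : 0 < ρ := by
      have h1 : 0 < |v i1| / w i1 := div_pos (abs_pos.mpr hi1) (hwpos i1)
      exact lt_of_lt_of_le h1 (hmax i1 (Finset.mem_univ i1))
    have hbound : ∀ j, |v j| ≤ ρ * w j := by
      intro j
      have := hmax j (Finset.mem_univ j)
      rw [div_le_iff₀ (hwpos j)] at this
      linarith [this]
    have key : |v i0| < |v i0| := by
      calc |v i0| = |∑ j, R j i0 * v j| := by rw [← hv' i0]
        _ ≤ ∑ j, |R j i0 * v j| := Finset.abs_sum_le_sum_abs _ _
        _ = ∑ j, R j i0 * |v j| := by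
            refine Finset.sum_congr rfl fun j _ => ?_
            rw [abs_mul, abs_of_nonneg (hnn j i0)]
        _ ≤ ∑ j, R j i0 * (ρ * w j) :=
            Finset.sum_le_sum fun j _ => mul_le_mul_of_nonneg_left (hbound j) (hnn j i0)
        _ = ρ * ∑ j, R j i0 * w j := by
            rw [Finset.mul_sum]
            exact Finset.sum_congr rfl fun j _ => by ring
        _ < ρ * w i0 := mul_lt_mul_of_pos_left (hwR i0) hρpos
        _ = |v i0| := by rw [hρ, div_mul_cancel₀ _ (hwpos i0).ne']
    exact lt_irrefl _ key
  have hdet : (1 - Rᵀ).det ≠ 0 := by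
    intro h
    obtain ⟨v, hvne, hv⟩ := (Matrix.exists_mulVec_eq_zero_iff).mpr h
    exact hvne (hinj v hv)
  have hu : IsUnit (1 - Rᵀ).det := isUnit_iff_ne_zero.mpr hdet
  rw [Matrix.mulVec_mulVec, Matrix.mul_nonsing_inv _ hu, Matrix.one_mulVec]
end Aux4

private lemma sub_transpose_mulVec_apply {n : ℕ} (R : Matrix (Fin n) (Fin n) ℝ)
    (v : Fin n → ℝ) (i : Fin n) :
    ((1 - Rᵀ).mulVec v) i = v i - ∑ j, R j i * v j := by
  simp only [Matrix.mulVec, dotProduct, Matrix.sub_apply, Matrix.one_apply,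
    Matrix.transpose_apply, sub_mul, ite_mul, one_mul, zero_mul, Finset.sum_sub_distrib,
    Finset.sum_ite_eq, Finset.mem_univ, if_true]

set_option maxHeartbeats 1600000 in
/-- For a substochastic, outflow-connected routing matrix `R`, continuously
differentiable demand functions `φ_i : [0,∞) → [0,∞)` with `φ_i(0) = 0`, strictly positive
derivative, and supremum `C_i ∈ (0,∞)`, and a nonnegative inflow `u` such that
`z* = (I − Rᵀ)⁻¹ u` satisfies `z*_i < C_i` for all `i`, the unique point `x* ≥ 0` with
`φ_i(x*_i) = z*_i` is a globally asymptotically stable equilibrium of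
`ẋ = u − (I − Rᵀ)φ(x)` on the nonnegative orthant: every solution staying in the orthant
converges to `x*`. -/
theorem demand_constrained_flow_network_global_stability {n : ℕ}
    (R : Matrix (Fin n) (Fin n) ℝ)
    (hnn : ∀ i j, 0 ≤ R i j)
    (hsub : ∀ i, ∑ j, R i j ≤ 1)
    (hout : ∀ i : Fin n, ∃ j : Fin n,
      Relation.ReflTransGen (fun a b => 0 < R a b) i j ∧ ∑ k, R j k < 1)
    (φ : Fin n → ℝ → ℝ) (C : Fin n → ℝ)
    (hφdiff : ∀ i, ContDiffOn ℝ 1 (φ i) (Set.Ici 0))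
    (hφ' : ∀ i, ∀ y ≥ (0 : ℝ), 0 < derivWithin (φ i) (Set.Ici 0) y)
    (hφ0 : ∀ i, φ i 0 = 0)
    (hφnn : ∀ i, ∀ y ≥ (0 : ℝ), 0 ≤ φ i y)
    (hφsup : ∀ i, IsLUB (φ i '' Set.Ici 0) (C i))
    (hC : ∀ i, 0 < C i)
    (u : Fin n → ℝ) (hu : ∀ i, 0 ≤ u i)
    (hz : ∀ i, (1 - Rᵀ)⁻¹.mulVec u i < C i)
    (xstar : Fin n → ℝ) (hxstarnn : ∀ i, 0 ≤ xstar i)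
    (hxstar : ∀ i, φ i (xstar i) = (1 - Rᵀ)⁻¹.mulVec u i)
    (x : ℝ → Fin n → ℝ)
    (hode : ∀ t ≥ (0 : ℝ),
      HasDerivAt x (u - (1 - Rᵀ).mulVec (fun i => φ i (x t i))) t)
    (hxnn : ∀ t ≥ (0 : ℝ), ∀ i, 0 ≤ x t i) :
    Tendsto x atTop (nhds xstar) := by
  rcases Nat.eq_zero_or_pos n with hn | hn
  · subst hn
    have hx : x = fun _ => xstar := by
      funext t i
      exact i.elim0
    rw [hx]
    exact tendsto_const_nhds
  -- weights and coercivity constant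
  obtain ⟨z, w, hz1, hw1, hzR, hwR⟩ := exists_weights R hn hnn hsub hout
  obtain ⟨μ, hμ, hquad⟩ := quad_bound R hn hnn z w hz1 hw1 hzR hwR
  set d : Fin n → ℝ := fun i => z i / w i with hd
  have hdpos : ∀ i, 0 < d i := fun i =>
    div_pos (lt_of_lt_of_le one_pos (hz1 i)) (lt_of_lt_of_le one_pos (hw1 i))
  -- equilibrium output
  set c : Fin n → ℝ := fun i => φ i (xstar i) with hcdef
  have hequil : (1 - Rᵀ).mulVec c = u := by
    have h1 : c = (1 - Rᵀ)⁻¹.mulVec u := funext hxstar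
    rw [h1]
    exact inv_eq R hn hnn w hw1 hwR u
  have hcC : ∀ i, c i < C i := fun i => by rw [hcdef]; simp only; rw [hxstar i]; exact hz i
  have hcnn : ∀ i, 0 ≤ c i := fun i => hφnn i (xstar i) (hxstarnn i)
  -- monotonicity of φ on [0, ∞)
  have hφcont : ∀ i, ContinuousOn (φ i) (Set.Ici 0) := fun i => (hφdiff i).continuousOn
  have hmono : ∀ i, StrictMonoOn (φ i) (Set.Ici 0) := by
    intro i
    refine strictMonoOn_of_deriv_pos (convex_Ici 0) (hφcont i) ?_
    intro y hy
    rw [interior_Ici] at hy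
    have h1 : derivWithin (φ i) (Set.Ici 0) y = deriv (φ i) y :=
      derivWithin_of_mem_nhds (Ici_mem_nhds hy)
    rw [← h1]
    exact hφ' i y (le_of_lt hy)
  -- extension ψ
  set ψ : Fin n → ℝ → ℝ := fun i y => φ i (max y 0) with hψdef
  have hψeq : ∀ i y, 0 ≤ y → ψ i y = φ i y := by
    intro i y hy
    rw [hψdef]
    simp only [max_eq_left hy]
  have hψcont : ∀ i, Continuous (ψ i) := by
    intro i
    exact (hφcont i).comp_continuous (continuous_id.max continuous_const)
      (fun y => le_max_right y 0)
  have hψmono : ∀ i, Monotone (ψ i) := by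
    intro i y y' hyy
    rcases eq_or_lt_of_le (max_le_max hyy (le_refl (0:ℝ))) with h | h
    · rw [hψdef]; simp only [h]; exact le_refl _
    · exact le_of_lt (hmono i (le_max_right y 0) (le_max_right y' 0) h)
  have hψxstar : ∀ i, ψ i (xstar i) = c i := fun i => hψeq i (xstar i) (hxstarnn i)
  -- the potential functions
  set Vi : Fin n → ℝ → ℝ := fun i ξ => ∫ s in (xstar i)..ξ, (ψ i s - c i) with hVidef
  have hInt : ∀ i, Continuous (fun s => ψ i s - c i) := fun i =>
    (hψcont i).sub continuous_const
  have hIntInt : ∀ i a b, IntervalIntegrable (fun s => ψ i s - c i)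
      MeasureTheory.volume a b := fun i a b => (hInt i).intervalIntegrable a b
  have hVid : ∀ i ξ, HasDerivAt (Vi i) (ψ i ξ - c i) ξ := fun i ξ =>
    ((hInt i).integral_hasStrictDerivAt (xstar i) ξ).hasDerivAt
  have hVinonneg : ∀ i ξ, 0 ≤ Vi i ξ := by
    intro i ξ
    rcases le_total (xstar i) ξ with h | h
    · exact intervalIntegral.integral_nonneg h fun s hs => by
        have := hψmono i hs.1
        rw [hψxstar i] at this
        linarith
    · rw [hVidef]
      simp only
      rw [intervalIntegral.integral_symm]
      rw [neg_nonneg]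
      have h0 : (∫ s in ξ..(xstar i), (ψ i s - c i)) ≤ ∫ s in ξ..(xstar i), (0:ℝ) := by
        refine intervalIntegral.integral_mono_on h (hIntInt i _ _)
          (intervalIntegrable_const) fun s hs => ?_
        have := hψmono i hs.2
        rw [hψxstar i] at this
        linarith
      simpa using h0
  have hVimono : ∀ i ξ ξ', xstar i ≤ ξ → ξ ≤ ξ' → Vi i ξ ≤ Vi i ξ' := by
    intro i ξ ξ' h1 h2
    have hsub' : Vi i ξ' - Vi i ξ = ∫ s in ξ..ξ', (ψ i s - c i) :=
      intervalIntegral.integral_interval_sub_left (hIntInt i _ _) (hIntInt i _ _)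
    have hpos : 0 ≤ ∫ s in ξ..ξ', (ψ i s - c i) := by
      refine intervalIntegral.integral_nonneg h2 fun s hs => ?_
      have := hψmono i (le_trans h1 hs.1)
      rw [hψxstar i] at this
      linarith
    linarith
  have hVianti : ∀ i ξ ξ', ξ ≤ ξ' → ξ' ≤ xstar i → Vi i ξ' ≤ Vi i ξ := by
    intro i ξ ξ' h1 h2
    have hsub' : Vi i ξ' - Vi i ξ = ∫ s in ξ..ξ', (ψ i s - c i) :=
      intervalIntegral.integral_interval_sub_left (hIntInt i _ _) (hIntInt i _ _)
    have hneg : (∫ s in ξ..ξ', (ψ i s - c i)) ≤ ∫ s in ξ..ξ', (0:ℝ) := by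
      refine intervalIntegral.integral_mono_on h1 (hIntInt i _ _)
        (intervalIntegrable_const) fun s hs => ?_
      have := hψmono i (le_trans hs.2 h2)
      rw [hψxstar i] at this
      linarith
    simp only [intervalIntegral.integral_const, smul_zero] at hneg
    linarith
  have hVipos : ∀ i ξ, 0 ≤ ξ → ξ ≠ xstar i → 0 < Vi i ξ := by
    intro i ξ hξ0 hne
    rcases lt_or_gt_of_ne hne with h | h
    · -- ξ < xstar i
      have hxpos : 0 < xstar i := lt_of_le_of_lt hξ0 h
      have hpos : 0 < ∫ s in ξ..(xstar i), (c i - ψ i s) := by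
        refine intervalIntegral.intervalIntegral_pos_of_pos_on
          ((continuous_const.sub (hψcont i)).intervalIntegrable _ _) (fun s hs => ?_) h
        have hmax : max s 0 < xstar i := max_lt hs.2 hxpos
        have : φ i (max s 0) < φ i (xstar i) :=
          hmono i (le_max_right s 0) (le_of_lt hxpos) hmax
        rw [hψdef]
        simp only
        linarith
      have heq : Vi i ξ = ∫ s in ξ..(xstar i), (c i - ψ i s) := by
        rw [hVidef]
        simp only
        rw [intervalIntegral.integral_symm]
        rw [← intervalIntegral.integral_neg]
        congr 1
        funext s
        ring
      rw [heq]
      exact hpos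
    · -- xstar i < ξ
      refine intervalIntegral.intervalIntegral_pos_of_pos_on (hIntInt i _ _)
        (fun s hs => ?_) h
      have hs0 : (0:ℝ) ≤ s := le_trans (hxstarnn i) (le_of_lt hs.1)
      have : φ i (xstar i) < φ i s := hmono i (hxstarnn i) hs0 hs.1
      rw [hψeq i s hs0]
      linarith
  have hViub : ∀ i ξ, 0 ≤ ξ → Vi i ξ ≤ |ξ - xstar i| * |ψ i ξ - c i| := by
    intro i ξ hξ0
    rcases le_total (xstar i) ξ with h | h
    · have hub : Vi i ξ ≤ ∫ _ in (xstar i)..ξ, (ψ i ξ - c i) := by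
        refine intervalIntegral.integral_mono_on h (hIntInt i _ _)
          (intervalIntegrable_const) fun s hs => ?_
        have := hψmono i hs.2
        linarith
      rw [intervalIntegral.integral_const, smul_eq_mul] at hub
      have he : 0 ≤ ψ i ξ - c i := by
        have := hψmono i h
        rw [hψxstar i] at this
        linarith
      calc Vi i ξ ≤ (ξ - xstar i) * (ψ i ξ - c i) := hub
        _ = |ξ - xstar i| * |ψ i ξ - c i| := by
            rw [abs_of_nonneg (by linarith), abs_of_nonneg he]
    · have heq : Vi i ξ = ∫ s in ξ..(xstar i), (c i - ψ i s) := by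
        rw [hVidef]
        simp only
        rw [intervalIntegral.integral_symm, ← intervalIntegral.integral_neg]
        congr 1
        funext s
        ring
      have hub : (∫ s in ξ..(xstar i), (c i - ψ i s))
          ≤ ∫ _ in ξ..(xstar i), (c i - ψ i ξ) := by
        refine intervalIntegral.integral_mono_on h
          ((continuous_const.sub (hψcont i)).intervalIntegrable _ _) (intervalIntegrable_const)
          fun s hs => ?_
        have := hψmono i hs.1
        linarith
      rw [intervalIntegral.integral_const, smul_eq_mul] at hub
      have he : ψ i ξ - c i ≤ 0 := by
        have := hψmono i h
        rw [hψxstar i] at this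
        linarith
      rw [heq]
      calc (∫ s in ξ..(xstar i), (c i - ψ i s)) ≤ (xstar i - ξ) * (c i - ψ i ξ) := hub
        _ = |ξ - xstar i| * |ψ i ξ - c i| := by
            rw [abs_of_nonpos (by linarith), abs_of_nonpos (by linarith)]
            ring
  -- coercivity reference points
  have hs0ex : ∀ i, ∃ s0, xstar i ≤ s0 ∧ 0 ≤ s0 ∧ c i < φ i s0 := by
    intro i
    have hnotub : c i ∉ upperBounds (φ i '' Set.Ici 0) := by
      intro hub
      exact absurd ((hφsup i).2 hub) (not_le.mpr (hcC i))
    simp only [upperBounds, Set.mem_setOf_eq] at hnotub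
    push_neg at hnotub
    obtain ⟨v, ⟨y0, hy0, rfl⟩, hgt⟩ := hnotub
    have hy0' : (0:ℝ) ≤ y0 := hy0
    refine ⟨max y0 (xstar i), le_max_right _ _, le_trans hy0' (le_max_left y0 _), ?_⟩
    have hmle : φ i y0 ≤ φ i (max y0 (xstar i)) :=
      (hmono i).monotoneOn hy0' (le_trans hy0' (le_max_left y0 _)) (le_max_left y0 _)
    exact lt_of_lt_of_le hgt hmle
  choose s0 hs0a hs0b hs0c using hs0ex
  set δ : Fin n → ℝ := fun i => φ i (s0 i) - c i with hδdef
  have hδpos : ∀ i, 0 < δ i := fun i => sub_pos.mpr (hs0c i)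
  have hcoerc : ∀ i ξ, s0 i ≤ ξ → δ i * (ξ - s0 i) ≤ Vi i ξ := by
    intro i ξ hξ
    have hsub' : Vi i ξ - Vi i (s0 i) = ∫ s in (s0 i)..ξ, (ψ i s - c i) :=
      intervalIntegral.integral_interval_sub_left (hIntInt i _ _) (hIntInt i _ _)
    have hlow : (∫ _ in (s0 i)..ξ, δ i) ≤ ∫ s in (s0 i)..ξ, (ψ i s - c i) := by
      refine intervalIntegral.integral_mono_on hξ intervalIntegrable_const (hIntInt i _ _)
        fun s hs => ?_
      have h1 : ψ i (s0 i) ≤ ψ i s := hψmono i hs.1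
      rw [hψeq i (s0 i) (hs0b i)] at h1
      rw [hδdef]
      simp only
      linarith
    rw [intervalIntegral.integral_const, smul_eq_mul] at hlow
    have h0 := hVinonneg i (s0 i)
    rw [mul_comm]
    linarith
  -- trajectory error and Lyapunov function
  set E : ℝ → Fin n → ℝ := fun t i => φ i (x t i) - c i with hEdef
  have hxdi : ∀ t, 0 ≤ t → ∀ i, HasDerivAt (fun τ => x τ i)
      ((u - (1 - Rᵀ).mulVec (fun j => φ j (x t j))) i) t := by
    intro t ht i
    exact hasDerivAt_pi.mp (hode t ht) i
  have hdot : ∀ t i, (u - (1 - Rᵀ).mulVec (fun j => φ j (x t j))) i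
      = -(E t i - ∑ j, R j i * E t j) := by
    intro t i
    have h1 := congrFun hequil i
    rw [sub_transpose_mulVec_apply] at h1
    have h2 : (u - (1 - Rᵀ).mulVec (fun j => φ j (x t j))) i
        = u i - (φ i (x t i) - ∑ j, R j i * φ j (x t j)) := by
      rw [Pi.sub_apply, sub_transpose_mulVec_apply]
    rw [h2, ← h1, hEdef]
    simp only
    rw [show (∑ j, R j i * (φ j (x t j) - c j))
        = ∑ j, R j i * φ j (x t j) - ∑ j, R j i * c j from by
      rw [← Finset.sum_sub_distrib]
      exact Finset.sum_congr rfl fun j _ => by ring]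
    ring
  set V : ℝ → ℝ := fun t => ∑ i, d i * Vi i (x t i) with hVdef
  have hVnn : ∀ t, 0 ≤ V t := fun t => Finset.sum_nonneg fun i _ =>
    mul_nonneg (le_of_lt (hdpos i)) (hVinonneg i _)
  have hVsingle : ∀ t i, d i * Vi i (x t i) ≤ V t := by
    intro t i
    exact Finset.single_le_sum (f := fun i => d i * Vi i (x t i))
      (fun j _ => mul_nonneg (le_of_lt (hdpos j)) (hVinonneg j _)) (Finset.mem_univ i)
  have hVder : ∀ t, 0 ≤ t → HasDerivAt V
      (-(∑ i, d i * (E t i * (E t i - ∑ j, R j i * E t j)))) t := by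
    intro t ht
    have h1 : HasDerivAt V (∑ i, d i * ((ψ i (x t i) - c i) *
        ((u - (1 - Rᵀ).mulVec (fun j => φ j (x t j))) i))) t := by
      rw [hVdef]
      refine HasDerivAt.fun_sum fun i _ => ?_
      exact ((hVid i (x t i)).comp t (hxdi t ht i)).const_mul (d i)
    have h2 : (∑ i, d i * ((ψ i (x t i) - c i) *
        ((u - (1 - Rᵀ).mulVec (fun j => φ j (x t j))) i)))
        = -(∑ i, d i * (E t i * (E t i - ∑ j, R j i * E t j))) := by
      rw [← Finset.sum_neg_distrib]
      refine Finset.sum_congr rfl fun i _ => ?_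
      rw [hdot t i, hψeq i (x t i) (hxnn t ht i), hEdef]
      ring
    rw [← h2]
    exact h1
  have hVanti : AntitoneOn V (Set.Ici (0:ℝ)) := by
    refine antitoneOn_of_deriv_nonpos (convex_Ici 0)
      (fun t ht => (hVder t ht).continuousAt.continuousWithinAt)
      (fun t ht => by
        rw [interior_Ici] at ht
        exact ((hVder t (le_of_lt ht)).differentiableAt).differentiableWithinAt) ?_
    intro t ht
    rw [interior_Ici] at ht
    rw [(hVder t (le_of_lt ht)).deriv]
    have hq := hquad (E t)
    have hsq : 0 ≤ ∑ i, (E t i)^2 := Finset.sum_nonneg fun i _ => sq_nonneg _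
    nlinarith [mul_nonneg (le_of_lt hμ) hsq]
  -- boundedness of the trajectory
  have hxB : ∀ i, ∀ t, 0 ≤ t → x t i ≤ s0 i + V 0 / (d i * δ i) := by
    intro i t ht
    by_contra hgt
    push_neg at hgt
    have hdδ : 0 < d i * δ i := mul_pos (hdpos i) (hδpos i)
    have hV0nn : 0 ≤ V 0 / (d i * δ i) := div_nonneg (hVnn 0) (le_of_lt hdδ)
    have hs0le : s0 i ≤ x t i := by linarith
    have h1 : δ i * (x t i - s0 i) ≤ Vi i (x t i) := hcoerc i (x t i) hs0le
    have h2 : d i * Vi i (x t i) ≤ V t := hVsingle t i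
    have h3 : V t ≤ V 0 := hVanti (le_refl (0:ℝ)) ht ht
    have h4 : V 0 / (d i * δ i) < x t i - s0 i := by linarith
    rw [div_lt_iff₀ hdδ] at h4
    nlinarith [hdpos i]
  set B : Fin n → ℝ := fun i => s0 i + V 0 / (d i * δ i) with hBdef
  have hBnn : ∀ i, 0 ≤ B i := by
    intro i
    have hdδ : 0 < d i * δ i := mul_pos (hdpos i) (hδpos i)
    have := div_nonneg (hVnn 0) (le_of_lt hdδ)
    have := hs0b i
    rw [hBdef]
    simp only
    linarith
  set g : Fin n → ℝ := fun i => d i * (B i + xstar i + 1) with hgdef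
  have hgpos : ∀ i, 0 < g i := by
    intro i
    apply mul_pos (hdpos i)
    nlinarith [hBnn i, hxstarnn i]
  have habs : ∀ t, 0 ≤ t → ∀ i, |x t i - xstar i| ≤ B i + xstar i + 1 := by
    intro t ht i
    rw [abs_le]
    constructor
    · have := hxnn t ht i
      nlinarith [hxstarnn i, hBnn i]
    · have h9 := hxB i t ht
      have hBi : B i = s0 i + V 0 / (d i * δ i) := rfl
      have hxle : x t i ≤ B i := by rw [hBi]; exact h9
      linarith [hxstarnn i, hxle]
  have hVub2 : ∀ t, 0 ≤ t → V t ≤ ∑ i, g i * |E t i| := by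
    intro t ht
    refine Finset.sum_le_sum fun i _ => ?_
    have h1 : Vi i (x t i) ≤ |x t i - xstar i| * |ψ i (x t i) - c i| :=
      hViub i _ (hxnn t ht i)
    rw [hψeq i _ (hxnn t ht i)] at h1
    have h2 : |x t i - xstar i| * |E t i| ≤ (B i + xstar i + 1) * |E t i| :=
      mul_le_mul_of_nonneg_right (habs t ht i) (abs_nonneg _)
    calc d i * Vi i (x t i) ≤ d i * ((B i + xstar i + 1) * |E t i|) :=
          mul_le_mul_of_nonneg_left (le_trans h1 h2) (le_of_lt (hdpos i))
      _ = g i * |E t i| := by rw [hgdef]; ring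
  set K : ℝ := ∑ i, (g i)^2 with hK
  have hKpos : 0 < K := by
    rw [hK]
    have hne : Nonempty (Fin n) := ⟨⟨0, hn⟩⟩
    exact Finset.sum_pos (fun i _ => pow_pos (hgpos i) 2) Finset.univ_nonempty
  have hVsq : ∀ t, 0 ≤ t → (V t)^2 ≤ K * ∑ i, (E t i)^2 := by
    intro t ht
    have h1 : (V t)^2 ≤ (∑ i, g i * |E t i|)^2 := by
      have h0 := hVub2 t ht
      nlinarith [hVnn t]
    have h2 := Finset.sum_mul_sq_le_sq_mul_sq Finset.univ g (fun i => |E t i|)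
    have h3 : (∑ i, |E t i|^2) = ∑ i, (E t i)^2 :=
      Finset.sum_congr rfl fun i _ => sq_abs _
    calc (V t)^2 ≤ (∑ i, g i * |E t i|)^2 := h1
      _ ≤ (∑ i, (g i)^2) * ∑ i, |E t i|^2 := h2
      _ = K * ∑ i, (E t i)^2 := by rw [hK, h3]
  set k : ℝ := μ / K with hk
  have hkpos : 0 < k := div_pos hμ hKpos
  have hVquadder : ∀ t, 0 ≤ t →
      -(∑ i, d i * (E t i * (E t i - ∑ j, R j i * E t j))) ≤ -(k * (V t)^2) := by
    intro t ht
    have hq := hquad (E t)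
    have h2 := hVsq t ht
    have h3 : k * (V t)^2 ≤ μ * ∑ i, (E t i)^2 := by
      rw [hk, div_mul_eq_mul_div, div_le_iff₀ hKpos]
      nlinarith
    linarith
  -- V tends to zero (eventual smallness)
  have hVsmall : ∀ ε, 0 < ε → ∃ T, 0 ≤ T ∧ ∀ t, T ≤ t → V t ≤ ε := by
    intro ε hε
    suffices h : ∃ T, 0 ≤ T ∧ V T ≤ ε by
      obtain ⟨T, hT0, hTε⟩ := h
      exact ⟨T, hT0, fun t htT =>
        le_trans (hVanti hT0 (le_trans hT0 htT) htT) hTε⟩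
    by_contra hcon
    push_neg at hcon
    set G : ℝ → ℝ := fun t => V t + (k * ε^2) * t with hG
    have hGder : ∀ t, 0 ≤ t → HasDerivAt G
        (-(∑ i, d i * (E t i * (E t i - ∑ j, R j i * E t j))) + k * ε^2) t := by
      intro t ht
      have hid : HasDerivAt (fun τ : ℝ => (k * ε^2) * τ) (k * ε^2) t := by
        simpa using (hasDerivAt_id t).const_mul (k * ε^2)
      exact (hVder t ht).add hid
    have hGanti : AntitoneOn G (Set.Ici (0:ℝ)) := by
      refine antitoneOn_of_deriv_nonpos (convex_Ici 0)
        (fun t ht => (hGder t ht).continuousAt.continuousWithinAt)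
        (fun t ht => by
          rw [interior_Ici] at ht
          exact ((hGder t (le_of_lt ht)).differentiableAt).differentiableWithinAt) ?_
      intro t ht
      rw [interior_Ici] at ht
      rw [(hGder t (le_of_lt ht)).deriv]
      have h1 := hVquadder t (le_of_lt ht)
      have h2 : ε < V t := hcon t (le_of_lt ht)
      have h3 : ε^2 ≤ (V t)^2 := by nlinarith
      nlinarith [hkpos]
    have hkε : 0 < k * ε^2 := mul_pos hkpos (pow_pos hε 2)
    set T0 : ℝ := V 0 / (k * ε^2) + 1 with hT0
    have hT0nn : 0 ≤ T0 := by
      have : 0 ≤ V 0 / (k * ε^2) := div_nonneg (hVnn 0) (le_of_lt hkε)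
      rw [hT0]
      linarith
    have h4 : G T0 ≤ G 0 := hGanti (le_refl (0:ℝ)) hT0nn hT0nn
    rw [hG] at h4
    simp only [mul_zero, add_zero] at h4
    have h6 : (k * ε^2) * T0 = V 0 + k * ε^2 := by
      rw [hT0]
      field_simp
    have h7 := hcon T0 hT0nn
    linarith [hVnn T0, hkε]
  -- conclusion, coordinatewise
  rw [tendsto_pi_nhds]
  intro i
  rw [Metric.tendsto_atTop]
  intro ε' hε'
  have hplus_pos : 0 < Vi i (xstar i + ε') :=
    hVipos i _ (by linarith [hxstarnn i]) (by linarith)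
  by_cases hcase : 0 ≤ xstar i - ε'
  · set L : ℝ := min (Vi i (xstar i + ε')) (Vi i (xstar i - ε')) with hL
    have hLpos : 0 < L := lt_min hplus_pos (hVipos i _ hcase (by linarith))
    obtain ⟨T, hT0, hT⟩ := hVsmall (d i * L / 2) (div_pos (mul_pos (hdpos i) hLpos) two_pos)
    refine ⟨T, fun t htT => ?_⟩
    have ht0 : 0 ≤ t := le_trans hT0 htT
    have h1 : d i * Vi i (x t i) ≤ V t := hVsingle t i
    have h2 : V t ≤ d i * L / 2 := hT t htT
    have h3 : Vi i (x t i) < L := by nlinarith [hdpos i, hLpos]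
    rw [Real.dist_eq]
    by_contra habs2
    push_neg at habs2
    rcases le_abs.mp habs2 with hca | hca
    · have h5 : Vi i (xstar i + ε') ≤ Vi i (x t i) :=
        hVimono i _ _ (by linarith) (by linarith)
      have := min_le_left (Vi i (xstar i + ε')) (Vi i (xstar i - ε'))
      rw [← hL] at this
      linarith
    · have h5 : Vi i (xstar i - ε') ≤ Vi i (x t i) :=
        hVianti i _ _ (by linarith) (by linarith)
      have := min_le_right (Vi i (xstar i + ε')) (Vi i (xstar i - ε'))
      rw [← hL] at this
      linarith
  · set L : ℝ := Vi i (xstar i + ε') with hL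
    have hLpos : 0 < L := hplus_pos
    obtain ⟨T, hT0, hT⟩ := hVsmall (d i * L / 2) (div_pos (mul_pos (hdpos i) hLpos) two_pos)
    refine ⟨T, fun t htT => ?_⟩
    have ht0 : 0 ≤ t := le_trans hT0 htT
    have h1 : d i * Vi i (x t i) ≤ V t := hVsingle t i
    have h2 : V t ≤ d i * L / 2 := hT t htT
    have h3 : Vi i (x t i) < L := by nlinarith [hdpos i, hLpos]
    rw [Real.dist_eq]
    by_contra habs2
    push_neg at habs2
    rcases le_abs.mp habs2 with hca | hca
    · have h5 : Vi i (xstar i + ε') ≤ Vi i (x t i) :=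
        hVimono i _ _ (by linarith) (by linarith)
      rw [← hL] at h5
      linarith
    · have := hxnn t ht0 i
      push_neg at hcase
      linarith
end

section
/- Let (I, A, R, S) be a network topology with cell set I = {1,…,n}, link set A ⊆ I×I, inflow set R ⊆ I, and outflow set S ⊆ I, let C ∈ ℝⁿ₊ be a vector of flow capacities, and let u ∈ ℝⁿ₊ with u_i = 0 for i ∉ R. For J ⊆ I, say a cell i ∉ J is outflow-connected avoiding J if either i ∈ S, or there is a directed path i = v_0, v_1, …, v_l in (I, A) with all v_h ∉ J and v_l ∈ S; let K_J = J ∪ {i ∉ J : i is not outflow-connected avoiding J}. Suppose Σ_{j∈J} C_j < Σ_{k∈K_J} u_k. Then for any functions F : [0,∞) → ℝ₊^{n×n} with F_{ij}(t) = 0 whenever (i,j) ∉ A, w : [0,∞) → ℝⁿ₊ with w_i(t) = 0 whenever i ∉ S, satisfying the capacity constraint Σ_j F_{ij}(t) + w_i(t) ≤ C_i for all i and t, every differentiable x : [0,∞) → ℝⁿ with ẋ(t) = u + F(t)ᵀ𝟙 − F(t)𝟙 − w(t) satisfies Σ_{k∈K_J} x_k(t) ≥ Σ_{k∈K_J} x_k(0)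 + t·(Σ_{k∈K_J} u_k − Σ_{j∈J} C_j) for all t ≥ 0; in particular x is unbounded in time. -/
open Matrix

open scoped Classical in
/-- mass-conservation cut argument. Given a network topology `(I, A, Rs, Ss)` with
flow capacities `C` and external inflow `u` supported on `Rs`, and a cut `J ⊆ I` whose residual
capacity is negative (`Σ_{j∈J} C_j < Σ_{k∈K_J} u_k`, where `K_J` consists of the cells in `J`
together with those that are not outflow-connected avoiding `J`), every trajectory of the mass
conservation law `ẋ = u + Fᵀ𝟙 − F𝟙 − w`, with flows supported on `A`, outflows supported on
`Ss`, and total outflow from each cell bounded by its capacity, satisfies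
`Σ_{k∈K_J} x_k(t) ≥ Σ_{k∈K_J} x_k(0) + t (Σ_{k∈K_J} u_k − Σ_{j∈J} C_j)`; in particular it is
unbounded in time. -/
theorem cut_capacity_violation_instability {n : ℕ}
    (A : Set (Fin n × Fin n)) (Rs Ss : Set (Fin n))
    (C u : Fin n → ℝ)
    (hC : ∀ i, 0 ≤ C i) (hu : ∀ i, 0 ≤ u i)
    (huR : ∀ i, i ∉ Rs → u i = 0)
    (J : Finset (Fin n))
    (K : Finset (Fin n))
    (hK : K = Finset.univ.filter (fun i => i ∈ J ∨
      ¬ ∃ s ∈ Ss, Relation.ReflTransGen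
        (fun a b : Fin n => (a, b) ∈ A ∧ a ∉ J ∧ b ∉ J) i s))
    (hcut : ∑ j ∈ J, C j < ∑ k ∈ K, u k)
    (F : ℝ → Matrix (Fin n) (Fin n) ℝ) (w : ℝ → Fin n → ℝ)
    (hFnn : ∀ t ≥ (0 : ℝ), ∀ i j, 0 ≤ F t i j)
    (hFA : ∀ t ≥ (0 : ℝ), ∀ i j, (i, j) ∉ A → F t i j = 0)
    (hwnn : ∀ t ≥ (0 : ℝ), ∀ i, 0 ≤ w t i)
    (hwS : ∀ t ≥ (0 : ℝ), ∀ i, i ∉ Ss → w t i = 0)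
    (hcap : ∀ t ≥ (0 : ℝ), ∀ i, (∑ j, F t i j) + w t i ≤ C i)
    (x : ℝ → Fin n → ℝ)
    (hode : ∀ t ≥ (0 : ℝ), HasDerivAt x
      (fun i => u i + (∑ j, F t j i) - (∑ j, F t i j) - w t i) t) :
    (∀ t ≥ (0 : ℝ),
      (∑ k ∈ K, x 0 k) + t * ((∑ k ∈ K, u k) - ∑ j ∈ J, C j) ≤ ∑ k ∈ K, x t k) ∧
    ¬ ∃ M : ℝ, ∀ t ≥ (0 : ℝ), ‖x t‖ ≤ M := by
  set r : Fin n → Fin n → Prop := fun a b => (a, b) ∈ A ∧ a ∉ J ∧ b ∉ J with hr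
  set c : ℝ := (∑ k ∈ K, u k) - ∑ j ∈ J, C j with hc
  have hJK : J ⊆ K := by
    intro j hj
    rw [hK]
    exact Finset.mem_filter.2 ⟨Finset.mem_univ _, Or.inl hj⟩
  -- key support fact for cells in K \ J
  have hsupp : ∀ t ≥ (0 : ℝ), ∀ k ∈ K, k ∉ J →
      w t k = 0 ∧ ∀ j, j ∉ K → F t k j = 0 := by
    intro t ht k hkK hkJ
    have hknc : ¬ ∃ s ∈ Ss, Relation.ReflTransGen r k s := by
      rw [hK] at hkK
      rcases (Finset.mem_filter.1 hkK).2 with h | h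
      · exact absurd h hkJ
      · exact h
    constructor
    · by_cases hks : k ∈ Ss
      · exact absurd ⟨k, hks, Relation.ReflTransGen.refl⟩ hknc
      · exact hwS t ht k hks
    · intro j hjK
      by_cases hkj : (k, j) ∈ A
      · exfalso
        rw [hK] at hjK
        simp only [Finset.mem_filter, Finset.mem_univ, true_and, not_or, not_not] at hjK
        obtain ⟨hjJ, s, hs, hpath⟩ := hjK
        exact hknc ⟨s, hs, Relation.ReflTransGen.head ⟨hkj, hkJ, hjJ⟩ hpath⟩
      · exact hFA t ht k j hkj
  -- derivative lower bound
  have hderiv_lb : ∀ t ≥ (0 : ℝ),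
      c ≤ ∑ k ∈ K, (u k + (∑ j, F t j k) - (∑ j, F t k j) - w t k) := by
    intro t ht
    have hsplit : ∀ f : Fin n → ℝ, (∑ j, f j) = (∑ j ∈ K, f j) + ∑ j ∈ Kᶜ, f j := by
      intro f
      rw [← Finset.sum_add_sum_compl K f]
    have hcancel : (∑ k ∈ K, ∑ j ∈ K, F t j k) = ∑ k ∈ K, ∑ j ∈ K, F t k j :=
      Finset.sum_comm
    have key : (∑ k ∈ K, (u k + (∑ j, F t j k) - (∑ j, F t k j) - w t k))
        = (∑ k ∈ K, u k) + (∑ k ∈ K, ∑ j ∈ Kᶜ, F t j k)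
          - ((∑ k ∈ K, ∑ j ∈ Kᶜ, F t k j) + ∑ k ∈ K, w t k) := by
      simp only [Finset.sum_sub_distrib, Finset.sum_add_distrib]
      rw [show (∑ k ∈ K, ∑ j, F t j k) = ∑ k ∈ K, ((∑ j ∈ K, F t j k) + ∑ j ∈ Kᶜ, F t j k)
          from Finset.sum_congr rfl fun k _ => hsplit _,
        show (∑ k ∈ K, ∑ j, F t k j) = ∑ k ∈ K, ((∑ j ∈ K, F t k j) + ∑ j ∈ Kᶜ, F t k j)
          from Finset.sum_congr rfl fun k _ => hsplit _]
      simp only [Finset.sum_add_distrib, hcancel]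
      ring
    rw [key, hc]
    have h1 : (0:ℝ) ≤ ∑ k ∈ K, ∑ j ∈ Kᶜ, F t j k :=
      Finset.sum_nonneg fun k _ => Finset.sum_nonneg fun j _ => hFnn t ht j k
    have h2 : (∑ k ∈ K, ((∑ j ∈ Kᶜ, F t k j) + w t k)) ≤ ∑ j ∈ J, C j := by
      have e1 : (∑ k ∈ K, ((∑ j ∈ Kᶜ, F t k j) + w t k))
          = ∑ k ∈ J, ((∑ j ∈ Kᶜ, F t k j) + w t k) := by
        refine (Finset.sum_subset hJK ?_).symm
        intro k hkK hkJ
        obtain ⟨hw0, hF0⟩ := hsupp t ht k hkK hkJ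
        rw [hw0, Finset.sum_eq_zero fun j hj => hF0 j (Finset.mem_compl.1 hj), add_zero]
      rw [e1]
      refine Finset.sum_le_sum fun k _ => ?_
      refine le_trans (add_le_add ?_ le_rfl) (hcap t ht k)
      exact Finset.sum_le_sum_of_subset_of_nonneg (Finset.subset_univ _)
        fun j _ _ => hFnn t ht k j
    simp only [Finset.sum_add_distrib] at h2
    linarith
  -- the function y and its derivative
  set y : ℝ → ℝ := fun t => ∑ k ∈ K, x t k with hy
  have hyderiv : ∀ t ≥ (0:ℝ), HasDerivAt y
      (∑ k ∈ K, (u k + (∑ j, F t j k) - (∑ j, F t k j) - w t k)) t := by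
    intro t ht
    exact HasDerivAt.fun_sum fun k _ => (hasDerivAt_pi.1 (hode t ht)) k
  -- part 1: linear growth
  have part1 : ∀ t ≥ (0:ℝ), y 0 + t * c ≤ y t := by
    intro t ht
    set g : ℝ → ℝ := fun s => y s - s * c with hg
    have hgmono : MonotoneOn g (Set.Ici (0:ℝ)) := by
      refine monotoneOn_of_hasDerivWithinAt_nonneg (convex_Ici 0)
        (f' := fun s => (∑ k ∈ K, (u k + (∑ j, F s j k) - (∑ j, F s k j) - w s k)) - c)
        ?_ ?_ ?_
      · intro s hs
        exact (((hyderiv s hs).sub ((hasDerivAt_id s).mul_const c)).continuousAt).continuousWithinAt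
      · intro s hs
        rw [interior_Ici] at hs
        have hs' : (0:ℝ) ≤ s := le_of_lt hs
        have := (hyderiv s hs').sub ((hasDerivAt_id s).mul_const c)
        rw [one_mul] at this
        exact this.hasDerivWithinAt
      · intro s hs
        rw [interior_Ici] at hs
        have := hderiv_lb s (le_of_lt hs)
        show 0 ≤ (∑ k ∈ K, (u k + (∑ j, F s j k) - (∑ j, F s k j) - w s k)) - c
        linarith
    have := hgmono (Set.self_mem_Ici) (Set.mem_Ici.2 ht) ht
    simp only [hg, zero_mul, sub_zero] at this
    linarith
  refine ⟨part1, ?_⟩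
  rintro ⟨M, hM⟩
  have hM0 : 0 ≤ M := le_trans (norm_nonneg _) (hM 0 le_rfl)
  have hcpos : 0 < c := by
    rw [hc]
    have : 0 ≤ ∑ j ∈ J, C j := Finset.sum_nonneg fun j _ => hC j
    linarith
  have hub : ∀ t ≥ (0:ℝ), y t ≤ n * M := by
    intro t ht
    calc y t ≤ ∑ k ∈ K, ‖x t‖ := by
          refine Finset.sum_le_sum fun k _ => ?_
          exact le_trans (le_abs_self _) (norm_le_pi_norm (x t) k)
      _ = K.card * ‖x t‖ := by rw [Finset.sum_const, nsmul_eq_mul]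
      _ ≤ n * M := by
          have h1 : (K.card : ℝ) ≤ n := by
            exact_mod_cast Finset.card_le_card (Finset.subset_univ K) |>.trans
              (by simp [Finset.card_univ])
          exact mul_le_mul h1 (hM t ht) (norm_nonneg _) (by positivity)
  set T : ℝ := max 0 ((n * M - y 0 + 1) / c) with hT
  have hT0 : (0:ℝ) ≤ T := le_max_left _ _
  have hT1 : (n * M - y 0 + 1) / c ≤ T := le_max_right _ _
  have hTc : n * M - y 0 + 1 ≤ T * c := by
    rw [← div_le_iff₀ hcpos] at *
    exact hT1
  have h1 := part1 T hT0
  have h2 := hub T hT0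
  linarith
end
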